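/- arXiv:0901.3452 — 5 statements merged into one kernel-verified Lean document; each statement's English description precedes it below -/
import Mathlib

section
/- The series ∑_{n=1}^∞ H_n / n^2 converges and equals 2 ζ(3). -/
open Finset Filter

private noncomputable def gg : ℕ → ℝ := fun m => 1 / (m + 1)

private lemma gg_pos (m : ℕ) : 0 < gg m := by
  unfold gg; positivity

private lemma gg_anti {m n : ℕ} (h : m ≤ n) : gg n ≤ gg m := by
  unfold gg
  apply one_div_le_one_div_of_le (by positivity)
  have : (m : ℝ) ≤ n := by exact_mod_cast h
  linarith

private lemma gg_tendsto : Tendsto gg atTop (nhds 0) :=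
  tendsto_one_div_add_atTop_nhds_zero_nat

private lemma tele (k : ℕ) : ∀ M : ℕ,
    ∑ m ∈ range M, (gg m - gg (m + k)) = ∑ i ∈ range k, (gg i - gg (M + i)) := by
  intro M
  induction M with
  | zero => simp
  | succ M ih =>
      rw [Finset.sum_range_succ, ih]
      have h2 : ∑ i ∈ range k, (gg (M + 1 + i) - gg (M + i)) = gg (M + k) - gg M := by
        have := Finset.sum_range_sub (fun i => gg (M + i)) k
        simp only [← add_assoc] at this ⊢
        convert this using 2 with i
        ring_nf
        simp
      have expand : ∑ i ∈ range k, (gg i - gg (M + 1 + i))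
          = ∑ i ∈ range k, (gg i - gg (M + i)) - ∑ i ∈ range k, (gg (M + 1 + i) - gg (M + i)) := by
        rw [← Finset.sum_sub_distrib]; congr 1 with i; ring
      rw [expand, h2]; ring

private lemma hasSum_gsub (k : ℕ) :
    HasSum (fun m => gg m - gg (m + k)) (∑ i ∈ range k, gg i) := by
  rw [hasSum_iff_tendsto_nat_of_nonneg
    (fun m => sub_nonneg.2 (gg_anti (Nat.le_add_right m k))) _]
  simp only [tele k]
  have : Tendsto (fun M => ∑ i ∈ range k, (gg i - gg (M + i))) atTop
      (nhds (∑ i ∈ range k, (gg i - 0))) := by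
    apply tendsto_finset_sum
    intro i _
    exact tendsto_const_nhds.sub (gg_tendsto.comp (tendsto_atTop_atTop_of_monotone
      (fun a b h => by omega) (fun b => ⟨b, Nat.le_add_right b i⟩)))
  simpa using this

private lemma hasSumA (k : ℕ) :
    HasSum (fun m => gg m * gg (m + k + 1)) ((∑ i ∈ range (k + 1), gg i) / (k + 1)) := by
  have h := (hasSum_gsub (k + 1)).div_const (k + 1)
  apply h.congr_fun
  intro m
  unfold gg
  have h1 : (m : ℝ) + 1 ≠ 0 := by positivity
  have h2 : (m : ℝ) + (k + 1) + 1 ≠ 0 := by positivity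
  have h3 : (k : ℝ) + 1 ≠ 0 := by positivity
  push_cast
  field_simp
  ring

/-- the double series -/
private noncomputable def bb : ℕ × ℕ → ℝ :=
  fun p => 1 / ((p.1 + 1) * (p.2 + 1) * (p.1 + p.2 + 2))

private lemma bb_pos (p : ℕ × ℕ) : 0 < bb p := by
  unfold bb; positivity

private lemma summable_shift : Summable (fun n : ℕ => 1 / ((n : ℝ) + 1) ^ (3/2 : ℝ)) := by
  have h : Summable (fun n : ℕ => 1 / (n : ℝ) ^ (3/2 : ℝ)) :=
    Real.summable_one_div_nat_rpow.mpr (by norm_num)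
  have := (summable_nat_add_iff 1).mpr h
  apply this.congr
  intro n
  push_cast
  ring_nf

private lemma sqrt_mul_le {x y : ℝ} (hx : 0 < x) (hy : 0 < y) :
    Real.sqrt x * Real.sqrt y ≤ x + y := by
  rw [← Real.sqrt_mul hx.le]
  calc Real.sqrt (x * y) ≤ Real.sqrt (((x + y)/2) ^ 2) := by
        apply Real.sqrt_le_sqrt; nlinarith [sq_nonneg (x - y)]
    _ = (x + y) / 2 := Real.sqrt_sq (by positivity)
    _ ≤ x + y := by linarith

private lemma rpow_three_half {x : ℝ} (hx : 0 < x) : x ^ (3/2 : ℝ) = x * Real.sqrt x := by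
  rw [show (3/2 : ℝ) = 1 + 1/2 by norm_num, Real.rpow_add hx, Real.rpow_one,
    ← Real.sqrt_eq_rpow]

private lemma summable_bb : Summable bb := by
  have hs := summable_shift
  have hprod := hs.mul_of_nonneg hs (fun n => by positivity) (fun n => by positivity)
  apply Summable.of_nonneg_of_le (fun p => (bb_pos p).le) _ hprod
  intro ⟨m, n⟩
  have hx : (0:ℝ) < (m : ℝ) + 1 := by positivity
  have hy : (0:ℝ) < (n : ℝ) + 1 := by positivity
  show bb (m, n) ≤ 1 / ((m:ℝ) + 1) ^ (3/2:ℝ) * (1 / ((n:ℝ) + 1) ^ (3/2:ℝ))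
  rw [rpow_three_half hx, rpow_three_half hy]
  unfold bb
  simp only
  rw [div_mul_div_comm, one_mul]
  apply one_div_le_one_div_of_le
  · positivity
  · have key := sqrt_mul_le hx hy
    calc ((m:ℝ)+1) * Real.sqrt ((m:ℝ)+1) * (((n:ℝ)+1) * Real.sqrt ((n:ℝ)+1))
        = ((m:ℝ)+1) * ((n:ℝ)+1) * (Real.sqrt ((m:ℝ)+1) * Real.sqrt ((n:ℝ)+1)) := by ring
      _ ≤ ((m:ℝ)+1) * ((n:ℝ)+1) * (((m:ℝ)+1) + ((n:ℝ)+1)) :=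
          mul_le_mul_of_nonneg_left key (by positivity)
      _ = ((m:ℝ)+1) * ((n:ℝ)+1) * ((m:ℝ) + (n:ℝ) + 2) := by ring


private noncomputable def Hh : ℕ → ℝ := fun n => ∑ j ∈ range n, (1 : ℝ) / (j + 1)

private lemma Hh_eq (n : ℕ) : Hh n = ∑ i ∈ range n, gg i := rfl

/-- fiberwise sum of bb -/
private lemma fiber_bb (n : ℕ) :
    HasSum (fun m => bb (n, m)) (Hh (n + 1) / ((n : ℝ) + 1) ^ 2) := by
  have h := (hasSumA n).mul_left (gg n)
  have heq : gg n * ((∑ i ∈ range (n + 1), gg i) / ((n : ℝ) + 1))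
      = Hh (n + 1) / ((n : ℝ) + 1) ^ 2 := by
    rw [Hh_eq]; unfold gg; rw [div_mul_div_comm, one_mul, sq]
  rw [heq] at h
  apply h.congr_fun
  intro m
  unfold gg bb
  simp only
  push_cast
  have h1 : (n : ℝ) + 1 ≠ 0 := by positivity
  have h2 : (m : ℝ) + 1 ≠ 0 := by positivity
  have h3 : (m : ℝ) + ((n : ℝ) + 1) + 1 ≠ 0 := by positivity
  field_simp
  ring

private noncomputable def cc : ℕ × ℕ → ℝ :=
  fun p => 1 / ((p.2 + 1) * (p.1 + p.2 + 2) ^ 2)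

private lemma cc_pos (p : ℕ × ℕ) : 0 < cc p := by unfold cc; positivity

private lemma summable_cc : Summable cc := by
  apply Summable.of_nonneg_of_le (fun p => (cc_pos p).le) _ summable_bb
  intro ⟨m, n⟩
  unfold cc bb
  simp only
  rw [div_le_div_iff₀ (by positivity) (by positivity)]
  have key : ((m:ℝ)+1) * (((n:ℝ)+1)*((m:ℝ)+(n:ℝ)+2))
      ≤ ((m:ℝ)+(n:ℝ)+2) * (((n:ℝ)+1)*((m:ℝ)+(n:ℝ)+2)) := by
    apply mul_le_mul_of_nonneg_right _ (by positivity)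
    have : (0:ℝ) ≤ (n:ℝ) := Nat.cast_nonneg n
    linarith
  nlinarith [key]

private lemma bb_eq_cc (p : ℕ × ℕ) : bb p = cc p.swap + cc p := by
  obtain ⟨m, n⟩ := p
  unfold bb cc
  simp only [Prod.swap_prod_mk]
  have h1 : (m : ℝ) + 1 ≠ 0 := by positivity
  have h2 : (n : ℝ) + 1 ≠ 0 := by positivity
  have h3 : (m : ℝ) + (n : ℝ) + 2 ≠ 0 := by positivity
  have h4 : (n : ℝ) + (m : ℝ) + 2 ≠ 0 := by positivity
  field_simp
  ring

private lemma hasSum_cc_swap {a : ℝ} (h : HasSum cc a) :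
    HasSum (fun p : ℕ × ℕ => cc p.swap) a := by
  exact ((Equiv.prodComm ℕ ℕ).hasSum_iff).mpr h

private lemma Sb_eq : ∑' p, bb p = 2 * ∑' p, cc p := by
  have h1 := summable_cc.hasSum
  have h2 := (hasSum_cc_swap h1).add h1
  have h3 : HasSum bb (∑' p, cc p + ∑' p, cc p) := h2.congr_fun fun p => (bb_eq_cc p)
  rw [h3.tsum_eq]; ring

private noncomputable def DD : ℕ × ℕ → ℝ :=
  fun p => if p.1 < p.2 then 1 / ((p.1 + 1) * ((p.2 : ℝ) + 1) ^ 2) else 0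

private def ee : ℕ × ℕ → ℕ × ℕ := fun p => (p.2, p.1 + p.2 + 1)

private lemma ee_inj : Function.Injective ee := by
  intro p q h
  simp only [ee, Prod.mk.injEq] at h
  obtain ⟨h1, h2⟩ := h
  ext
  · omega
  · exact h1

private lemma DD_comp_ee : ∀ p, (DD ∘ ee) p = cc p := by
  intro ⟨m, n⟩
  simp only [Function.comp_apply, ee, DD, cc]
  simp only [show n < m + n + 1 by omega, if_true]
  push_cast
  ring_nf

private lemma DD_vanish : ∀ p ∉ Set.range ee, DD p = 0 := by
  intro ⟨a, b⟩ hp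
  by_contra h
  apply hp
  have hab : a < b := by
    by_contra hab
    exact h (if_neg hab)
  exact ⟨(b - a - 1, a), by simp only [ee]; ext <;> simp; omega⟩

private lemma hasSum_DD : HasSum DD (∑' p, cc p) := by
  rw [← Function.Injective.hasSum_iff ee_inj DD_vanish]
  exact summable_cc.hasSum.congr_fun fun p => DD_comp_ee p

/-- fiberwise sum of DD (over the second coordinate) -/
private lemma fiber_DD (k : ℕ) :
    HasSum (fun a => DD (a, k)) (Hh k / ((k : ℝ) + 1) ^ 2) := by
  have h : HasSum (fun a => DD (a, k)) (∑ a ∈ range k, DD (a, k)) := by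
    apply hasSum_sum_of_ne_finset_zero
    intro a ha
    simp only [DD]
    rw [if_neg]
    simpa using ha
  convert h using 1
  rw [Hh_eq]
  unfold gg DD
  rw [Finset.sum_div]
  apply Finset.sum_congr rfl
  intro a ha
  rw [if_pos (Finset.mem_range.mp ha)]
  field_simp

set_option maxHeartbeats 1000000 in
private lemma hasSum_T : HasSum (fun k => Hh k / ((k : ℝ) + 1) ^ 2) (∑' p, cc p) := by
  have hsw : HasSum (fun p : ℕ × ℕ => DD p.swap) (∑' p, cc p) :=
    ((Equiv.prodComm ℕ ℕ).hasSum_iff).mpr hasSum_DD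
  apply hsw.prod_fiberwise (g := fun k => Hh k / ((k : ℝ) + 1) ^ 2)
  intro k
  exact (fiber_DD k).congr_fun fun a => rfl

private lemma hasSum_S : HasSum (fun n => Hh (n + 1) / ((n : ℝ) + 1) ^ 2) (∑' p, bb p) :=
  summable_bb.hasSum.prod_fiberwise fun n => fiber_bb n

private noncomputable def Z3 : ℝ := ∑' n : ℕ, 1 / ((n : ℝ) + 1) ^ 3

private lemma summable_cube : Summable (fun n : ℕ => 1 / ((n : ℝ) + 1) ^ 3) := by
  have h : Summable (fun n : ℕ => 1 / (n : ℝ) ^ (3:ℝ)) :=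
    Real.summable_one_div_nat_rpow.mpr (by norm_num)
  have := (summable_nat_add_iff 1).mpr h
  apply this.congr
  intro n
  rw [show ((n + 1 : ℕ) : ℝ) = (n : ℝ) + 1 by push_cast; ring]
  rw [show ((n:ℝ) + 1) ^ (3:ℝ) = ((n:ℝ) + 1) ^ (3:ℕ) by
    rw [← Real.rpow_natCast ((n:ℝ)+1) 3]; norm_num]

private lemma hasSum_Z3 : HasSum (fun n : ℕ => 1 / ((n : ℝ) + 1) ^ 3) Z3 :=
  summable_cube.hasSum

private lemma S_eq_T_add_Z3 : ∑' p, bb p = ∑' p, cc p + Z3 := by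
  have h := hasSum_T.add hasSum_Z3
  have h2 : HasSum (fun n => Hh (n + 1) / ((n : ℝ) + 1) ^ 2) (∑' p, cc p + Z3) := by
    apply h.congr_fun
    intro n
    rw [show Hh (n + 1) = Hh n + 1 / ((n:ℝ) + 1) by
      unfold Hh; rw [Finset.sum_range_succ]]
    field_simp
  exact hasSum_S.unique h2

private lemma S_val : ∑' p, bb p = 2 * Z3 := by
  have h1 := Sb_eq
  have h2 := S_eq_T_add_Z3
  linarith

private lemma real_result : HasSum (fun n => Hh (n + 1) / ((n : ℝ) + 1) ^ 2) (2 * Z3) := by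
  rw [← S_val]; exact hasSum_S

private lemma zeta_three_eq : riemannZeta 3 = ((Z3 : ℝ) : ℂ) := by
  have hz := zeta_nat_eq_tsum_of_gt_one (k := 3) (by norm_num)
  have hc : HasSum (fun n : ℕ => 1 / ((n : ℂ) + 1) ^ 3) ((Z3 : ℝ) : ℂ) := by
    apply (Complex.hasSum_ofReal.mpr hasSum_Z3).congr_fun
    intro n
    push_cast
    ring
  have hc' : HasSum (fun n : ℕ => 1 / (n : ℂ) ^ 3) ((Z3 : ℝ) : ℂ) := by
    have := (hasSum_nat_add_iff (f := fun n : ℕ => 1 / (n : ℂ) ^ 3) 1).mp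
      (hc.congr_fun fun n => by push_cast; ring)
    simpa using this
  rw [show (3 : ℂ) = ((3 : ℕ) : ℂ) by norm_num, hz, hc'.tsum_eq]

theorem euler_sum_two :
    HasSum (fun n : ℕ =>
        ((∑ j ∈ Finset.range (n + 1), (1 : ℝ) / (j + 1) : ℝ) : ℂ) / ((n : ℂ) + 1) ^ 2)
      (2 * riemannZeta 3) := by
  rw [zeta_three_eq]
  have h := Complex.hasSum_ofReal.mpr real_result
  have : ((2 * Z3 : ℝ) : ℂ) = 2 * ((Z3 : ℝ) : ℂ) := by push_cast; ring
  rw [this] at h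
  apply h.congr_fun
  intro n
  unfold Hh
  push_cast
  ring
end

section
/- The series ∑_{n=1}^∞ H_n / n^3 converges and equals (5/4) ζ(4). -/
open Real Finset

namespace EulerSum3

noncomputable def f22 (p : ℕ × ℕ) : ℝ := (1 / ((p.1 : ℝ) + 1) ^ 2) * (1 / ((p.2 : ℝ) + 1) ^ 2)

noncomputable def g (p : ℕ × ℕ) : ℝ := 1 / (((p.1 : ℝ) + 1) ^ 2 * ((p.1 : ℝ) + (p.2 : ℝ) + 2) ^ 2)

noncomputable def w (p : ℕ × ℕ) : ℝ :=
  1 / (((p.1 : ℝ) + 1) * (((p.2 : ℝ) + 1) * ((p.1 : ℝ) + (p.2 : ℝ) + 2) ^ 2))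

noncomputable def v (p : ℕ × ℕ) : ℝ := 1 / (((p.1 : ℝ) + 1) * ((p.1 : ℝ) + (p.2 : ℝ) + 2) ^ 3)

lemma z2 : HasSum (fun k : ℕ => (1 : ℝ) / ((k : ℝ) + 1) ^ 2) (π ^ 2 / 6) := by
  have h := (hasSum_nat_add_iff' (f := fun n : ℕ => (1 : ℝ) / (n : ℝ) ^ 2) 1).2 hasSum_zeta_two
  norm_num at h
  refine h.congr_fun fun k => ?_
  norm_num

lemma z4 : HasSum (fun k : ℕ => (1 : ℝ) / ((k : ℝ) + 1) ^ 4) (π ^ 4 / 90) := by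
  have h := (hasSum_nat_add_iff' (f := fun n : ℕ => (1 : ℝ) / (n : ℝ) ^ 4) 1).2 hasSum_zeta_four
  norm_num at h
  refine h.congr_fun fun k => ?_
  norm_num

lemma hf22 : HasSum f22 (π ^ 2 / 6 * (π ^ 2 / 6)) := by
  have hs := Summable.mul_of_nonneg (f := fun k : ℕ => (1 : ℝ) / ((k : ℝ) + 1) ^ 2)
    (g := fun k : ℕ => (1 : ℝ) / ((k : ℝ) + 1) ^ 2) z2.summable z2.summable
    (fun k => by positivity) (fun k => by positivity)
  have h := HasSum.mul (f := fun k : ℕ => (1 : ℝ) / ((k : ℝ) + 1) ^ 2)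
    (g := fun k : ℕ => (1 : ℝ) / ((k : ℝ) + 1) ^ 2) z2 z2 hs
  exact h

lemma summable_f22 : Summable f22 := ⟨_, hf22⟩

/-- Pull a `HasSum` along an injection. -/
lemma hasSum_of_inj {α : Type*} {f : ℕ × ℕ → ℝ} {g' : α → ℝ} (e : α → ℕ × ℕ)
    (he : Function.Injective e) (h0 : ∀ p ∉ Set.range e, f p = 0)
    (hfe : ∀ x, f (e x) = g' x) {a : ℝ} (hg : HasSum g' a) : HasSum f a :=
  (he.hasSum_iff h0).1 (((funext hfe : f ∘ e = g') ▸ hg))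

lemma inj1 : Function.Injective (fun p : ℕ × ℕ => (p.1, p.1 + p.2 + 1)) := by
  intro p q h
  simp only [Prod.mk.injEq] at h
  exact Prod.ext h.1 (by omega)

lemma inj2 : Function.Injective (fun p : ℕ × ℕ => (p.1 + p.2 + 1, p.1)) := by
  intro p q h
  simp only [Prod.mk.injEq] at h
  exact Prod.ext h.2 (by omega)

lemma inj3 : Function.Injective (fun i : ℕ => (i, i)) := by
  intro p q h
  simpa using congrArg Prod.fst h

lemma summable_g : Summable g := by
  refine Summable.of_nonneg_of_le (fun p => by unfold g; positivity) (fun p => ?_) summable_f22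
  unfold g f22
  rw [div_mul_div_comm, one_mul]
  refine one_div_le_one_div_of_le (by positivity) ?_
  have h1 : (0:ℝ) ≤ (p.1 : ℝ) := Nat.cast_nonneg _
  have h2 : (0:ℝ) ≤ (p.2 : ℝ) := Nat.cast_nonneg _
  have key : ((p.2:ℝ)+1)^2 ≤ ((p.1:ℝ)+(p.2:ℝ)+2)^2 := by nlinarith
  nlinarith [mul_le_mul_of_nonneg_left key (show (0:ℝ) ≤ ((p.1:ℝ)+1)^2 by positivity)]

lemma summable_w : Summable w := by
  refine Summable.of_nonneg_of_le (fun p => by unfold w; positivity) (fun p => ?_) summable_f22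
  unfold w f22
  rw [div_mul_div_comm, one_mul]
  refine one_div_le_one_div_of_le (by positivity) ?_
  have h1 : (0:ℝ) ≤ (p.1 : ℝ) := Nat.cast_nonneg _
  have h2 : (0:ℝ) ≤ (p.2 : ℝ) := Nat.cast_nonneg _
  have hX : (0:ℝ) ≤ ((p.1:ℝ)+1) * ((p.2:ℝ)+1) := by positivity
  have hXs : ((p.1:ℝ)+1) * ((p.2:ℝ)+1) ≤ ((p.1:ℝ)+(p.2:ℝ)+2)^2 := by nlinarith
  nlinarith [mul_le_mul_of_nonneg_left hXs hX]

lemma summable_v : Summable v := by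
  refine Summable.of_nonneg_of_le (fun p => by unfold v; positivity) (fun p => ?_) summable_w
  unfold v w
  refine one_div_le_one_div_of_le (by positivity) ?_
  have h1 : (0:ℝ) ≤ (p.1 : ℝ) := Nat.cast_nonneg _
  have h2 : (0:ℝ) ≤ (p.2 : ℝ) := Nat.cast_nonneg _
  have e : ((p.1:ℝ)+1) * (((p.1:ℝ)+(p.2:ℝ)+2)^3)
      = ((p.1:ℝ)+1) * (((p.1:ℝ)+(p.2:ℝ)+2) * ((p.1:ℝ)+(p.2:ℝ)+2)^2) := by ring
  rw [e]
  refine mul_le_mul_of_nonneg_left ?_ (by positivity)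
  exact mul_le_mul_of_nonneg_right (by linarith) (by positivity)

noncomputable def U : ℝ := ∑' p, g p
noncomputable def W : ℝ := ∑' p, w p
noncomputable def V : ℝ := ∑' p, v p

lemma hU : HasSum g U := summable_g.hasSum
lemma hW : HasSum w W := summable_w.hasSum
lemma hV : HasSum v V := summable_v.hasSum

lemma U_val : U = π ^ 4 / 120 := by
  have hL : HasSum (fun p : ℕ × ℕ => if p.1 < p.2 then f22 p else 0) U := by
    refine hasSum_of_inj _ inj1 (fun p hp => ?_) (fun x => ?_) hU
    · try dsimp only
      split_ifs with hc
      · exact absurd ⟨(p.1, p.2 - p.1 - 1), Prod.ext rfl (by simp; omega)⟩ hp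
      · rfl
    · dsimp only
      rw [if_pos (by omega : x.1 < x.1 + x.2 + 1)]
      simp only [f22, g]
      rw [div_mul_div_comm, one_mul]
      push_cast
      ring_nf
  have hG : HasSum (fun p : ℕ × ℕ => if p.2 < p.1 then f22 p else 0) U := by
    refine hasSum_of_inj _ inj2 (fun p hp => ?_) (fun x => ?_) hU
    · try dsimp only
      split_ifs with hc
      · exact absurd ⟨(p.2, p.1 - p.2 - 1), Prod.ext (by simp; omega) rfl⟩ hp
      · rfl
    · dsimp only
      rw [if_pos (by omega : x.1 < x.1 + x.2 + 1)]
      simp only [f22, g]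
      rw [div_mul_div_comm, one_mul]
      push_cast
      ring_nf
  have hD : HasSum (fun p : ℕ × ℕ => if p.1 = p.2 then f22 p else 0) (π ^ 4 / 90) := by
    refine hasSum_of_inj _ inj3 (fun p hp => ?_) (fun x => ?_) z4
    · try dsimp only
      split_ifs with hc
      · exact absurd ⟨p.1, Prod.ext rfl hc⟩ hp
      · rfl
    · dsimp only
      rw [if_pos rfl]
      simp only [f22]
      rw [div_mul_div_comm, one_mul]
      ring_nf
  have key : HasSum f22 (U + U + π ^ 4 / 90) := by
    refine ((hL.add hG).add hD).congr_fun fun p => ?_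
    rcases lt_trichotomy p.1 p.2 with hc | hc | hc
    · rw [if_pos hc, if_neg (by omega), if_neg (by omega)]; ring
    · rw [if_neg (by omega), if_neg (by omega), if_pos hc]; ring
    · rw [if_neg (by omega), if_pos hc, if_neg (by omega)]; ring
  have h := hf22.unique key
  nlinarith [h]

lemma W_val : W = π ^ 4 / 180 := by
  have hG : HasSum (fun p : ℕ × ℕ => g p.swap) U :=
    (Equiv.prodComm ℕ ℕ).hasSum_iff.2 hU
  have key : HasSum f22 (U + U + 2 * W) := by
    refine ((hU.add hG).add (hW.mul_left 2)).congr_fun fun p => ?_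
    simp only [f22, g, w, Prod.fst_swap, Prod.snd_swap]
    have h1 : ((p.1 : ℝ) + 1) ≠ 0 := by positivity
    have h2 : ((p.2 : ℝ) + 1) ≠ 0 := by positivity
    have h3 : ((p.1 : ℝ) + (p.2 : ℝ) + 2) ≠ 0 := by positivity
    have h4 : ((p.2 : ℝ) + (p.1 : ℝ) + 2) ≠ 0 := by positivity
    field_simp
    ring
  have h := hf22.unique key
  have hu := U_val
  nlinarith [h, hu]

lemma V_val : V = π ^ 4 / 360 := by
  have hV' : HasSum (fun p : ℕ × ℕ => v p.swap) V :=
    (Equiv.prodComm ℕ ℕ).hasSum_iff.2 hV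
  have key : HasSum w (V + V) := by
    refine (hV.add hV').congr_fun fun p => ?_
    simp only [v, w, Prod.fst_swap, Prod.snd_swap]
    have h1 : ((p.1 : ℝ) + 1) ≠ 0 := by positivity
    have h2 : ((p.2 : ℝ) + 1) ≠ 0 := by positivity
    have h3 : ((p.1 : ℝ) + (p.2 : ℝ) + 2) ≠ 0 := by positivity
    have h4 : ((p.2 : ℝ) + (p.1 : ℝ) + 2) ≠ 0 := by positivity
    field_simp
    ring
  have h := hW.unique key
  have hw := W_val
  linarith [h, hw]

noncomputable def h : ℕ × ℕ → ℝ := fun p =>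
  if p.2 ≤ p.1 then 1 / (((p.2 : ℝ) + 1) * ((p.1 : ℝ) + 1) ^ 3) else 0

lemma hh : HasSum h (π ^ 4 / 90 + V) := by
  have hD : HasSum (fun p : ℕ × ℕ => if p.2 = p.1 then 1 / ((p.1 : ℝ) + 1) ^ 4 else 0)
      (π ^ 4 / 90) := by
    refine hasSum_of_inj _ inj3 (fun p hp => ?_) (fun x => ?_) z4
    · try dsimp only
      split_ifs with hc
      · exact absurd ⟨p.1, Prod.ext rfl hc.symm⟩ hp
      · rfl
    · simp
  have hS : HasSum (fun p : ℕ × ℕ =>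
      if p.2 < p.1 then 1 / (((p.2 : ℝ) + 1) * ((p.1 : ℝ) + 1) ^ 3) else 0) V := by
    refine hasSum_of_inj _ inj2 (fun p hp => ?_) (fun x => ?_) hV
    · try dsimp only
      split_ifs with hc
      · exact absurd ⟨(p.2, p.1 - p.2 - 1), Prod.ext (by simp; omega) rfl⟩ hp
      · rfl
    · dsimp only
      rw [if_pos (by omega : x.1 < x.1 + x.2 + 1)]
      simp only [v]
      push_cast
      ring_nf
  refine (hD.add hS).congr_fun fun p => ?_
  unfold h
  rcases lt_trichotomy p.2 p.1 with hc | hc | hc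
  · rw [if_pos hc.le, if_neg (by omega), if_pos hc]; ring
  · rw [if_pos hc.le, if_pos hc, if_neg (by omega), hc]; ring
  · rw [if_neg (by omega), if_neg (by omega), if_neg (by omega)]; ring

theorem real_version :
    HasSum (fun n : ℕ =>
      (∑ j ∈ Finset.range (n + 1), (1 : ℝ) / (j + 1)) / ((n : ℝ) + 1) ^ 3) (π ^ 4 / 72) := by
  have fiber : ∀ n : ℕ, HasSum (fun j : ℕ => h (n, j))
      ((∑ j ∈ Finset.range (n + 1), (1 : ℝ) / (j + 1)) / ((n : ℝ) + 1) ^ 3) := by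
    intro n
    have h0 : ∀ j ∉ Finset.range (n + 1), h (n, j) = 0 := by
      intro j hj
      simp only [Finset.mem_range] at hj
      unfold h
      rw [if_neg (by dsimp only; omega)]
    have : HasSum (fun j : ℕ => h (n, j)) _ := hasSum_sum_of_ne_finset_zero h0
    convert this using 1
    rw [Finset.sum_div]
    refine Finset.sum_congr rfl fun j hj => ?_
    simp only [Finset.mem_range] at hj
    unfold h
    rw [if_pos (by dsimp only; omega)]
    rw [div_div]
  have total : HasSum h (π ^ 4 / 72) := by
    have := hh
    rw [V_val] at this
    convert this using 1
    ring
  exact total.prod_fiberwise fiber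

end EulerSum3

theorem euler_sum_three :
    HasSum (fun n : ℕ =>
        ((∑ j ∈ Finset.range (n + 1), (1 : ℝ) / (j + 1) : ℝ) : ℂ) / ((n : ℂ) + 1) ^ 3)
      ((5 / 4) * riemannZeta 4) := by
  have hr := EulerSum3.real_version
  have hc := Complex.hasSum_ofReal.2 hr
  rw [riemannZeta_four]
  have hval : ((5:ℂ) / 4) * ((π:ℂ) ^ 4 / 90) = ((π ^ 4 / 72 : ℝ) : ℂ) := by
    push_cast
    ring
  rw [hval]
  refine hc.congr_fun fun n => ?_
  push_cast
  ring
end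

section
/- For real z with |z| < 2π, log((1 − e^{−z})/z) = ∑_{n=1}^∞ (B_n/n) · z^n/n!, where B_n are the Bernoulli numbers (with convention B_1 = -1/2 adjusted to match the expansion of z/(e^z−1)). -/
open Real Filter Finset Topology

-- Step D part 1: Euler product for sinh
lemma aux_prod (z : ℝ) (hz : z ≠ 0) :
    Tendsto (fun n : ℕ => ∏ j ∈ Finset.range n, (1 + (z / (2 * π * ((j : ℝ) + 1))) ^ 2))
      atTop (𝓝 (Real.sinh (z / 2) / (z / 2))) := by
  have hπ : (π : ℝ) ≠ 0 := Real.pi_ne_zero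
  set w : ℂ := Complex.I * z / (2 * π) with hw
  have hc0 : ((z / 2 : ℝ) : ℂ) * Complex.I ≠ 0 := by
    simp [Complex.I_ne_zero, hz, div_eq_zero_iff]
  have hπc : (π : ℂ) ≠ 0 := by exact_mod_cast hπ
  have h1 : (π : ℂ) * w = ((z / 2 : ℝ) : ℂ) * Complex.I := by
    rw [hw]
    push_cast
    field_simp
  have h2 := Complex.tendsto_euler_sin_prod w
  rw [h1, Complex.sin_mul_I] at h2
  have hfac : ∀ n : ℕ, (∏ j ∈ Finset.range n, ((1 : ℂ) - w ^ 2 / ((j : ℂ) + 1) ^ 2))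
      = ((∏ j ∈ Finset.range n, (1 + (z / (2 * π * ((j : ℝ) + 1))) ^ 2) : ℝ) : ℂ) := by
    intro n
    rw [Complex.ofReal_prod]
    refine Finset.prod_congr rfl fun j _ => ?_
    have hj : ((j : ℂ) + 1) ≠ 0 := by
      have : ((j : ℂ) + 1) = ((j + 1 : ℕ) : ℂ) := by push_cast; ring
      rw [this]
      exact_mod_cast j.succ_ne_zero
    rw [hw]
    push_cast
    field_simp
    ring_nf
    rw [Complex.I_sq]
    ring
  have h3 := h2.const_mul ((((z / 2 : ℝ) : ℂ) * Complex.I)⁻¹)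
  simp only [hfac] at h3
  have h4 : Tendsto (fun n : ℕ =>
      ((∏ j ∈ Finset.range n, (1 + (z / (2 * π * ((j : ℝ) + 1))) ^ 2) : ℝ) : ℂ))
      atTop (𝓝 ((Real.sinh (z / 2) / (z / 2) : ℝ) : ℂ)) := by
    have heq : ∀ x : ℂ, (((z / 2 : ℝ) : ℂ) * Complex.I)⁻¹ * (((z / 2 : ℝ) : ℂ) * Complex.I * x) = x :=
      fun x => inv_mul_cancel_left₀ hc0 x
    simp only [heq] at h3
    convert h3 using 2
    rw [← Complex.ofReal_sinh]
    have hzc : (z : ℂ) ≠ 0 := by exact_mod_cast hz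
    field_simp [Complex.I_ne_zero]
    push_cast
    field_simp
  exact Filter.tendsto_ofReal_iff.mp h4

lemma aux_logsum (z : ℝ) (hz : z ≠ 0) :
    HasSum (fun n : ℕ => Real.log (1 + (z / (2 * π * ((n : ℝ) + 1))) ^ 2))
      (Real.log (Real.sinh (z / 2) / (z / 2))) := by
  have hterm : ∀ n : ℕ, (0 : ℝ) < 1 + (z / (2 * π * ((n : ℝ) + 1))) ^ 2 := fun n => by positivity
  rw [hasSum_iff_tendsto_nat_of_nonneg
    (fun n => Real.log_nonneg (by nlinarith [sq_nonneg (z / (2 * π * ((n : ℝ) + 1)))]))]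
  have hlim : 0 < Real.sinh (z / 2) / (z / 2) := by
    rcases hz.lt_or_gt with h | h
    · have h1 : Real.sinh (z / 2) < 0 := by
        rw [← Real.sinh_zero]
        exact Real.sinh_lt_sinh.mpr (by linarith)
      exact div_pos_of_neg_of_neg h1 (by linarith)
    · have h1 : 0 < Real.sinh (z / 2) := by
        rw [← Real.sinh_zero]
        exact Real.sinh_lt_sinh.mpr (by linarith)
      exact div_pos h1 (by linarith)
  have hcont := (Real.continuousAt_log hlim.ne').tendsto.comp (aux_prod z hz)
  convert hcont using 2 with n
  rw [Function.comp_apply, Real.log_prod (fun j _ => (hterm j).ne')]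


lemma aux_logseries (t : ℝ) (ht : |t| < 1) :
    HasSum (fun k : ℕ => (-1 : ℝ) ^ k * t ^ (2 * (k + 1)) / (k + 1))
      (Real.log (1 + t ^ 2)) := by
  have h1 : |t| ^ 2 < 1 := pow_lt_one₀ (abs_nonneg t) ht (by norm_num)
  have h : |(-(t ^ 2))| < 1 := by rwa [abs_neg, abs_pow]
  have h2 := (hasSum_pow_div_log_of_abs_lt_one h).neg
  rw [sub_neg_eq_add, neg_neg] at h2
  convert h2 using 1
  · rfl
  funext k
  rw [neg_pow, pow_mul, pow_succ]
  ring


lemma aux_zeta (z : ℝ) (k : ℕ) :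
    HasSum (fun n : ℕ => (-1 : ℝ) ^ k * (z / (2 * π * ((n : ℝ) + 1))) ^ (2 * (k + 1)) / (k + 1))
      ((bernoulli (2 * (k + 1)) : ℝ) / (2 * (k + 1)) * z ^ (2 * (k + 1)) /
        Nat.factorial (2 * (k + 1))) := by
  have h := hasSum_zeta_nat (k := k + 1) k.succ_ne_zero
  set c : ℝ := (-1 : ℝ) ^ k * z ^ (2 * (k + 1)) / ((k + 1) * (2 * π) ^ (2 * (k + 1))) with hc
  have h2 := (hasSum_nat_add_iff' (f := fun n : ℕ => c * (1 / (n : ℝ) ^ (2 * (k + 1)))) 1).mpr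
    (h.mul_left c)
  have hπ : (0 : ℝ) < π := Real.pi_pos
  have hk1 : ((k : ℝ) + 1) ≠ 0 := by positivity
  convert h2 using 1
  · rfl
  · funext n
    have hn : ((n : ℝ) + 1) ≠ 0 := by positivity
    push_cast
    rw [hc, div_pow, mul_pow (2 * π) ((n : ℝ) + 1)]
    field_simp
  · rw [Finset.sum_range_one]
    norm_num
    rw [hc]
    have hE : 2 * (k + 1) - 1 + 1 = 2 * (k + 1) := by omega
    have hpow : (2 : ℝ) ^ (2 * (k + 1) - 1) = 2 ^ (2 * (k + 1)) / 2 := by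
      rw [eq_div_iff (two_ne_zero' ℝ), ← pow_succ, hE]
    have hne2 : (Nat.factorial (2 * (k + 1)) : ℝ) ≠ 0 := by positivity
    rcases Nat.even_or_odd k with hk | hk
    · have e1 : ((-1 : ℝ)) ^ k = 1 := Even.neg_one_pow hk
      have e2 : ((-1 : ℝ)) ^ (k + 1 + 1) = 1 := Even.neg_one_pow (by
        rcases hk with ⟨m, hm⟩; exact ⟨m + 1, by omega⟩)
      rw [e1, e2, hpow, mul_pow (2 : ℝ) π]
      field_simp
    · have e1 : ((-1 : ℝ)) ^ k = -1 := Odd.neg_one_pow hk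
      have e2 : ((-1 : ℝ)) ^ (k + 1 + 1) = -1 := Odd.neg_one_pow (by
        rcases hk with ⟨m, hm⟩; exact ⟨m + 1, by omega⟩)
      rw [e1, e2, hpow, mul_pow (2 : ℝ) π]
      field_simp


set_option maxHeartbeats 1000000 in
lemma aux_summable (z : ℝ) (hz : |z| < 2 * π) :
    Summable (fun p : ℕ × ℕ =>
      (-1 : ℝ) ^ p.1 * (z / (2 * π * ((p.2 : ℝ) + 1))) ^ (2 * (p.1 + 1)) / (p.1 + 1)) := by
  have hπ : (0 : ℝ) < π := Real.pi_pos
  set q : ℝ := |z| / (2 * π) with hq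
  have hq0 : 0 ≤ q := by positivity
  have hq1 : q < 1 := by rw [hq, div_lt_one (by positivity)]; exact hz
  have hsum2 : Summable (fun n : ℕ => (q / ((n : ℝ) + 1)) ^ 2) := by
    have h0 : Summable (fun n : ℕ => q ^ 2 * (1 / ((n : ℝ)) ^ 2)) :=
      ((Real.summable_one_div_nat_pow (p := 2)).mpr one_lt_two).mul_left (q ^ 2)
    have h1 := (summable_nat_add_iff (f := fun n : ℕ => q ^ 2 * (1 / ((n : ℝ)) ^ 2)) 1).mpr h0
    apply h1.congr
    intro n
    push_cast
    rw [div_pow, mul_one_div]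
    rw [hq, div_pow, div_pow]
  have hb : Summable (fun p : ℕ × ℕ => (q ^ 2) ^ p.1 * (q / ((p.2 : ℝ) + 1)) ^ 2) :=
    Summable.mul_of_nonneg (summable_geometric_of_lt_one (by positivity) (by nlinarith))
      hsum2 (fun k => by positivity) (fun n => by positivity)
  apply Summable.of_abs
  apply hb.of_nonneg_of_le (fun p => abs_nonneg _)
  rintro ⟨k, n⟩
  have hn1 : (0 : ℝ) < (n : ℝ) + 1 := by positivity
  set t : ℝ := z / (2 * π * ((n : ℝ) + 1)) with hts
  have htq : |t| = q / ((n : ℝ) + 1) := by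
    rw [hts, hq, abs_div, abs_of_pos (show (0:ℝ) < 2 * π * ((n : ℝ) + 1) by positivity)]
    field_simp
    try ring
  have htq' : |t| ≤ q := by
    rw [htq]
    calc q / ((n : ℝ) + 1) ≤ q / 1 := by gcongr; linarith [Nat.cast_nonneg (α := ℝ) n]
    _ = q := div_one q
  calc |(-1 : ℝ) ^ k * t ^ (2 * (k + 1)) / (k + 1)|
      = |t| ^ (2 * (k + 1)) / ((k : ℝ) + 1) := by
        rw [abs_div, abs_mul, abs_pow, abs_pow, abs_neg, abs_one, one_pow, one_mul,
          abs_of_pos (show (0:ℝ) < (k : ℝ) + 1 by positivity)]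
    _ ≤ |t| ^ (2 * (k + 1)) := div_le_self (by positivity) (by linarith [Nat.cast_nonneg (α := ℝ) k])
    _ = (|t| ^ 2) ^ k * |t| ^ 2 := by
        rw [show 2 * (k + 1) = 2 * k + 2 from by ring, pow_add, pow_mul]
    _ ≤ (q ^ 2) ^ k * (q / ((n : ℝ) + 1)) ^ 2 := by
        rw [htq]
        gcongr
        all_goals first | positivity | (rw [← htq]; exact htq')


lemma aux_sinh_pos (z : ℝ) (hz : z ≠ 0) : 0 < Real.sinh (z / 2) / (z / 2) := by
  rcases hz.lt_or_gt with h | h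
  · have h1 : Real.sinh (z / 2) < 0 := by
      rw [← Real.sinh_zero]
      exact Real.sinh_lt_sinh.mpr (by linarith)
    exact div_pos_of_neg_of_neg h1 (by linarith)
  · have h1 : 0 < Real.sinh (z / 2) := by
      rw [← Real.sinh_zero]
      exact Real.sinh_lt_sinh.mpr (by linarith)
    exact div_pos h1 (by linarith)

set_option maxHeartbeats 2000000 in
theorem log_one_sub_exp_div (z : ℝ) (hz : |z| < 2 * Real.pi) :
    HasSum (fun n : ℕ =>
        ((bernoulli (n + 1) : ℝ) / (n + 1)) * z ^ (n + 1) / (Nat.factorial (n + 1)))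
      (Real.log ((1 - Real.exp (-z)) / z)) := by
  rcases eq_or_ne z 0 with rfl | hz0
  · have h0 : (fun n : ℕ =>
        ((bernoulli (n + 1) : ℝ) / (n + 1)) * (0 : ℝ) ^ (n + 1) / (Nat.factorial (n + 1)))
        = fun _ => (0 : ℝ) := by
      funext n
      rw [zero_pow (Nat.succ_ne_zero n)]
      simp
    rw [h0]
    simp only [neg_zero, Real.exp_zero, sub_self, zero_div, Real.log_zero]
    exact hasSum_zero
  · have hπ : (0 : ℝ) < π := Real.pi_pos
    set F : ℕ → ℝ := fun n =>
      ((bernoulli (n + 1) : ℝ) / (n + 1)) * z ^ (n + 1) / (Nat.factorial (n + 1)) with hFdef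
    obtain ⟨T, hT⟩ := aux_summable z hz
    have hZ : HasSum (fun k : ℕ => (bernoulli (2 * (k + 1)) : ℝ) / (2 * (k + 1)) *
        z ^ (2 * (k + 1)) / Nat.factorial (2 * (k + 1))) T :=
      hT.prod_fiberwise (fun k => aux_zeta z k)
    have hswap : HasSum (fun p : ℕ × ℕ =>
        (-1 : ℝ) ^ p.2 * (z / (2 * π * ((p.1 : ℝ) + 1))) ^ (2 * (p.2 + 1)) / (p.2 + 1)) T :=
      ((Equiv.prodComm ℕ ℕ).hasSum_iff).mpr hT
    have hL' : HasSum (fun n : ℕ => Real.log (1 + (z / (2 * π * ((n : ℝ) + 1))) ^ 2)) T := by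
      refine hswap.prod_fiberwise (fun n => aux_logseries (z / (2 * π * ((n : ℝ) + 1))) ?_)
      have hpos : (0 : ℝ) < 2 * π * ((n : ℝ) + 1) := by positivity
      rw [abs_div, abs_of_pos hpos, div_lt_one hpos]
      calc |z| < 2 * π := hz
        _ ≤ 2 * π * ((n : ℝ) + 1) := by nlinarith [Nat.cast_nonneg (α := ℝ) n]
    have hT_eq : T = Real.log (Real.sinh (z / 2) / (z / 2)) :=
      hL'.unique (aux_logsum z hz0)
    have hcomp : HasSum ((fun n => F (n + 1)) ∘ (fun k : ℕ => 2 * k)) T := by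
      have hfun : ∀ k : ℕ, ((fun n => F (n + 1)) ∘ (fun k : ℕ => 2 * k)) k
          = (bernoulli (2 * (k + 1)) : ℝ) / (2 * (k + 1)) *
            z ^ (2 * (k + 1)) / Nat.factorial (2 * (k + 1)) := by
        intro k
        show F (2 * k + 1) = _
        rw [hFdef]
        have hidx : 2 * k + 1 + 1 = 2 * (k + 1) := by ring
        simp only [hidx]
        push_cast
        ring
      rw [funext hfun]
      exact hZ
    have hinj : Function.Injective (fun k : ℕ => 2 * k) := fun a b h => by
      simpa using h
    have hvanish : ∀ n ∉ Set.range (fun k : ℕ => 2 * k), F (n + 1) = 0 := by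
      intro n hn
      rcases Nat.even_or_odd n with ⟨r, hr⟩ | ho
      · exact absurd ⟨r, show 2 * r = n by omega⟩ hn
      · rcases ho with ⟨m, hm⟩
        have hb : bernoulli (n + 1 + 1) = 0 := by
          rw [bernoulli_eq_bernoulli'_of_ne_one (by omega)]
          exact bernoulli'_eq_zero_of_odd ⟨m + 1, by omega⟩ (by omega)
        rw [hFdef]
        simp [hb]
    have hg : HasSum (fun n => F (n + 1)) T :=
      (Function.Injective.hasSum_iff hinj hvanish).mp hcomp
    have hfinal : HasSum F (T + ∑ i ∈ Finset.range 1, F i) :=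
      (hasSum_nat_add_iff 1).mp hg
    have hF0 : F 0 = -z / 2 := by
      rw [hFdef]
      norm_num [bernoulli_one, Nat.factorial]
      push_cast
      ring
    convert hfinal using 1
    rw [Finset.sum_range_one, hF0, hT_eq]
    have hlim := aux_sinh_pos z hz0
    have key : Real.exp (-z / 2) * (Real.sinh (z / 2) / (z / 2)) = (1 - Real.exp (-z)) / z := by
      rw [Real.sinh_eq]
      have h1 : Real.exp (-z / 2) * Real.exp (z / 2) = 1 := by
        rw [← Real.exp_add, show -z / 2 + z / 2 = 0 from by ring, Real.exp_zero]
      have h2 : Real.exp (-z / 2) * Real.exp (-(z / 2)) = Real.exp (-z) := by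
        rw [← Real.exp_add]; congr 1; ring
      calc Real.exp (-z / 2) * ((Real.exp (z / 2) - Real.exp (-(z / 2))) / 2 / (z / 2))
          = (Real.exp (-z / 2) * Real.exp (z / 2)
              - Real.exp (-z / 2) * Real.exp (-(z / 2))) / z := by ring
        _ = (1 - Real.exp (-z)) / z := by rw [h1, h2]
    rw [← key, Real.log_mul (Real.exp_ne_zero _) (ne_of_gt hlim), Real.log_exp]
    ring
end

section
/- For real z with 0 < z < 1, Li_2(e^{−z}) = ζ(2) + z log z − z + ∑_{n=1}^∞ (B_n/n) · z^{n+1} / ((n+1) · n!). -/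
/-- The dilogarithm `Li_2(x) = ∑_{n ≥ 1} x^n / n^2`. -/
noncomputable def Li2 (x : ℝ) : ℝ := ∑' n : ℕ, x ^ (n + 1) / ((n + 1 : ℕ) : ℝ) ^ 2

open Finset Real Set


lemma two_pow_le_factorial (j : ℕ) : 2 ^ j ≤ (j + 1).factorial := by
  induction j with
  | zero => simp
  | succ k ih =>
    rw [pow_succ, Nat.factorial_succ]
    calc 2 ^ k * 2 ≤ (k + 1).factorial * 2 := by omega
    _ ≤ (k + 1 + 1) * (k + 1).factorial := by nlinarith [Nat.one_le_iff_ne_zero.mpr (Nat.factorial_ne_zero (k+1))]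

lemma half_pow_sum_le (M : ℕ) : ∑ k ∈ range M, ((1:ℚ)/2) ^ (M - k) ≤ 1 := by
  rw [← Finset.sum_range_reflect]
  have h1 : ∀ j ∈ range M, ((1:ℚ)/2) ^ (M - (M - 1 - j)) = (1/2) * (1/2)^j := by
    intro j hj
    rw [Finset.mem_range] at hj
    have : M - (M - 1 - j) = j + 1 := by omega
    rw [this, pow_succ]
    ring
  rw [Finset.sum_congr rfl h1, ← Finset.mul_sum]
  have h2 : ∑ j ∈ range M, ((1:ℚ)/2)^j = (1 - (1/2)^M) * 2 := by
    rw [geom_sum_eq (by norm_num)]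
    have : ((1:ℚ)/2)^M ≤ 1 := pow_le_one₀ (by norm_num) (by norm_num)
    field_simp
    ring
  rw [h2]
  have : (0:ℚ) ≤ (1/2)^M := by positivity
  nlinarith

lemma bernoulli_abs_le (n : ℕ) : |bernoulli n| ≤ (n.factorial : ℚ) := by
  induction n using Nat.strong_induction_on with
  | _ n ih =>
    match n with
    | 0 => simp
    | m + 1 =>
      have hrec := sum_bernoulli (m + 2)
      rw [if_neg (by omega), Finset.sum_range_succ] at hrec
      have hch : ((m + 2).choose (m + 1) : ℚ) = (m + 2 : ℚ) := by
        rw [Nat.choose_succ_self_right]; push_cast; ring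
      rw [hch] at hrec
      have hB : bernoulli (m + 1) = -(∑ k ∈ range (m + 1), ((m + 2).choose k : ℚ) * bernoulli k) / (m + 2) := by
        field_simp
        linarith [hrec]
      rw [hB, abs_div, abs_neg]
      have habs2 : |(m + 2 : ℚ)| = (m + 2 : ℚ) := abs_of_pos (by positivity)
      rw [habs2, div_le_iff₀ (by positivity)]
      calc |∑ k ∈ range (m + 1), ((m + 2).choose k : ℚ) * bernoulli k|
          ≤ ∑ k ∈ range (m + 1), |((m + 2).choose k : ℚ) * bernoulli k| :=
            Finset.abs_sum_le_sum_abs _ _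
        _ ≤ ∑ k ∈ range (m + 1), ((m + 2).factorial : ℚ) * (1/2) ^ (m + 1 - k) := by
            apply Finset.sum_le_sum
            intro k hk
            rw [Finset.mem_range] at hk
            rw [abs_mul, Nat.abs_cast]
            have h1 : |bernoulli k| ≤ (k.factorial : ℚ) := ih k (by omega)
            calc ((m + 2).choose k : ℚ) * |bernoulli k|
                ≤ ((m + 2).choose k : ℚ) * (k.factorial : ℚ) := by
                  apply mul_le_mul_of_nonneg_left h1 (by positivity)
              _ ≤ ((m + 2).factorial : ℚ) * (1/2) ^ (m + 1 - k) := by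
                  -- (m+2).choose k * k! * 2^(m+1-k) ≤ (m+2)!
                  have hnat : (m + 2).choose k * k.factorial * 2 ^ (m + 1 - k) ≤ (m + 2).factorial := by
                    have h2 : 2 ^ (m + 1 - k) ≤ (m + 2 - k).factorial := by
                      have := two_pow_le_factorial (m + 1 - k)
                      have he : m + 1 - k + 1 = m + 2 - k := by omega
                      rwa [he] at this
                    calc (m + 2).choose k * k.factorial * 2 ^ (m + 1 - k)
                        ≤ (m + 2).choose k * k.factorial * (m + 2 - k).factorial :=
                          Nat.mul_le_mul_left _ h2
                      _ = (m + 2).factorial := Nat.choose_mul_factorial_mul_factorial (by omega)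
                  have hq : ((m + 2).choose k : ℚ) * k.factorial * 2 ^ (m + 1 - k) ≤ ((m + 2).factorial : ℚ) := by
                    exact_mod_cast hnat
                  have hp : (0:ℚ) < 2 ^ (m + 1 - k) := by positivity
                  rw [div_pow, one_pow, mul_one_div, le_div_iff₀ hp]
                  exact hq
        _ = ((m + 2).factorial : ℚ) * ∑ k ∈ range (m + 1), ((1:ℚ)/2) ^ (m + 1 - k) := by
            rw [Finset.mul_sum]
        _ ≤ ((m + 2).factorial : ℚ) * 1 := by
            apply mul_le_mul_of_nonneg_left (half_pow_sum_le (m + 1)) (by positivity)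
        _ = ((m + 1).factorial : ℚ) * (m + 2) := by
            rw [mul_one, Nat.factorial_succ (m + 1)]
            push_cast
            ring



lemma bernoulli_abs_le_real (n : ℕ) : |(bernoulli n : ℝ)| ≤ (n.factorial : ℝ) := by
  rw [← Rat.cast_abs]
  exact_mod_cast bernoulli_abs_le n

lemma hasSum_exp_real (z : ℝ) : HasSum (fun n : ℕ => z ^ n / n.factorial) (Real.exp z) := by
  rw [Real.exp_eq_exp_ℝ]
  exact NormedSpace.expSeries_div_hasSum_exp z

lemma hasSum_exp_sub_one (z : ℝ) :
    HasSum (fun j : ℕ => z ^ (j + 1) / (j + 1).factorial) (Real.exp z - 1) := by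
  have h := (hasSum_nat_add_iff' (f := fun n : ℕ => z ^ n / n.factorial) 1).mpr (hasSum_exp_real z)
  simpa using h

lemma summable_norm_bern {z : ℝ} (h0 : 0 ≤ z) (h1 : z < 1) :
    Summable fun n : ℕ => ‖(bernoulli n : ℝ) * z ^ n / n.factorial‖ := by
  apply Summable.of_nonneg_of_le (fun n => norm_nonneg _) (fun n => ?_)
    (summable_geometric_of_lt_one h0 h1)
  rw [Real.norm_eq_abs, abs_div, abs_mul, abs_pow, abs_of_nonneg h0, Nat.abs_cast]
  rw [div_le_iff₀ (by positivity)]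
  calc |(bernoulli n : ℝ)| * z ^ n ≤ (n.factorial : ℝ) * z ^ n := by
        apply mul_le_mul_of_nonneg_right (bernoulli_abs_le_real n) (by positivity)
    _ = z ^ n * n.factorial := by ring

lemma hasSum_bern_exp {z : ℝ} (h0 : 0 < z) (h1 : z < 1) :
    HasSum (fun n : ℕ => (bernoulli n : ℝ) * z ^ n / n.factorial) (z / (Real.exp z - 1)) := by
  set f : ℕ → ℝ := fun n => (bernoulli n : ℝ) * z ^ n / n.factorial with hf
  set g : ℕ → ℝ := fun j => z ^ (j + 1) / (j + 1).factorial with hg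
  have hfn : Summable fun n => ‖f n‖ := summable_norm_bern h0.le h1
  have hgn : Summable fun n => ‖g n‖ := by
    apply Summable.of_nonneg_of_le (fun n => norm_nonneg _) (fun n => ?_)
      ((summable_geometric_of_lt_one h0.le h1).comp_injective (add_right_injective 1))
    simp only [hg, Real.norm_eq_abs, abs_div, abs_pow, abs_of_nonneg h0.le, Nat.abs_cast,
      Function.comp]
    have hfge : (1 : ℝ) ≤ ((n + 1).factorial : ℝ) := by
      exact_mod_cast Nat.one_le_iff_ne_zero.mpr (Nat.factorial_ne_zero (n + 1))
    calc z ^ (n + 1) / ((n + 1).factorial : ℝ) ≤ z ^ (n + 1) / 1 :=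
          div_le_div_of_nonneg_left (by positivity) one_pos hfge
      _ = z ^ (n + 1) := by rw [div_one]
      _ = z ^ (1 + n) := by rw [add_comm]
  have hmul : (∑' n, f n) * (∑' n, g n) =
      ∑' n, ∑ kl ∈ Finset.HasAntidiagonal.antidiagonal n, f kl.1 * g kl.2 :=
    tsum_mul_tsum_eq_tsum_sum_antidiagonal_of_summable_norm hfn hgn
  have hinner : ∀ n : ℕ, (∑ kl ∈ Finset.HasAntidiagonal.antidiagonal n, f kl.1 * g kl.2)
      = if n = 0 then z else 0 := by
    intro n
    rw [Finset.Nat.sum_antidiagonal_eq_sum_range_succ_mk]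
    have hterm : ∀ k ∈ range (n + 1), f k * g (n - k)
        = z ^ (n + 1) / (n + 1).factorial * (((n + 1).choose k : ℚ) * bernoulli k : ℚ) := by
      intro k hk
      rw [Finset.mem_range] at hk
      have hkle : k ≤ n + 1 := by omega
      have hfact : ((n + 1).choose k : ℝ) * k.factorial * (n + 1 - k).factorial
          = ((n + 1).factorial : ℝ) := by
        exact_mod_cast congrArg (Nat.cast : ℕ → ℝ) (Nat.choose_mul_factorial_mul_factorial hkle)
      have hidx : n - k + 1 = n + 1 - k := by omega
      simp only [hf, hg, hidx]
      push_cast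
      have hk0 : (k.factorial : ℝ) ≠ 0 := by exact_mod_cast Nat.factorial_ne_zero k
      have hk1 : ((n + 1 - k).factorial : ℝ) ≠ 0 := by exact_mod_cast Nat.factorial_ne_zero _
      have hk2 : ((n + 1).factorial : ℝ) ≠ 0 := by exact_mod_cast Nat.factorial_ne_zero _
      have hzp : (bernoulli k : ℝ) * z ^ k * z ^ (n + 1 - k) = (bernoulli k : ℝ) * z ^ (n + 1) := by
        rw [mul_assoc, ← pow_add]; congr 2; omega
      rw [div_mul_div_comm, hzp, div_mul_eq_mul_div, div_eq_div_iff (by positivity) (by positivity), ← hfact]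
      ring
    rw [Finset.sum_congr rfl hterm, ← Finset.mul_sum]
    have hsb : (∑ k ∈ range (n + 1), (((n + 1).choose k : ℚ) * bernoulli k : ℚ) : ℝ)
        = ((if n + 1 = 1 then (1:ℚ) else 0 : ℚ) : ℝ) := by
      exact_mod_cast congrArg (Rat.cast : ℚ → ℝ) (sum_bernoulli (n + 1))
    push_cast at hsb ⊢
    rw [hsb]
    split_ifs with hn
    · subst hn; simp [Nat.factorial]
    · simp
  have hsum_ite : (∑' n : ℕ, (if n = 0 then z else 0)) = z := tsum_ite_eq 0 (fun _ => z)
  have hgsum : (∑' n, g n) = Real.exp z - 1 := (hasSum_exp_sub_one z).tsum_eq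
  have hexpne : Real.exp z - 1 ≠ 0 :=
    sub_ne_zero.mpr (ne_of_gt (Real.one_lt_exp_iff.mpr h0))
  have hkey : (∑' n, f n) = z / (Real.exp z - 1) := by
    rw [eq_div_iff hexpne, ← hgsum, hmul]
    rw [tsum_congr hinner]
    exact hsum_ite
  rw [← hkey]
  exact hfn.of_norm.hasSum



noncomputable def T (y : ℝ) : ℝ := ∑' n : ℕ, ((bernoulli (n + 1) : ℝ) / (n + 1)) * y ^ (n + 2)
            / ((n + 2) * (Nat.factorial (n + 1)))

noncomputable def G (y : ℝ) : ℝ :=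
  ∑' n : ℕ, (bernoulli (n + 1) : ℝ) * y ^ (n + 1) / ((n + 1) * (Nat.factorial (n + 1)))



-- |B_{n+1}| / ((n+1) * (n+1)!) ≤ 1
lemma bern_coeff_le (n : ℕ) : |(bernoulli (n + 1) : ℝ)| / (((n : ℝ) + 1) * ((n + 1).factorial : ℝ)) ≤ 1 := by
  rw [div_le_one (by positivity)]
  calc |(bernoulli (n + 1) : ℝ)| ≤ ((n + 1).factorial : ℝ) := bernoulli_abs_le_real (n + 1)
    _ ≤ ((n : ℝ) + 1) * ((n + 1).factorial : ℝ) := by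
        nlinarith [Nat.cast_pos (α := ℝ).mpr (Nat.factorial_pos (n + 1)), (Nat.cast_nonneg (α := ℝ) n)]

lemma hasSum_bern_tail {z : ℝ} (h0 : 0 < z) (h1 : z < 1) :
    HasSum (fun m : ℕ => (bernoulli (m + 1) : ℝ) * z ^ m / ((m + 1).factorial : ℝ))
      ((1 : ℝ) / (Real.exp z - 1) - 1 / z) := by
  have h := (hasSum_nat_add_iff' (f := fun n : ℕ => (bernoulli n : ℝ) * z ^ n / n.factorial) 1).mpr
    (hasSum_bern_exp h0 h1)
  simp only [range_one, sum_singleton, bernoulli_zero, Rat.cast_one, pow_zero, mul_one,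
    Nat.factorial_zero, Nat.cast_one, one_mul, one_div] at h
  have h2 := h.div_const z
  have hzne : z ≠ 0 := ne_of_gt h0
  have hexpne : Real.exp z - 1 ≠ 0 := sub_ne_zero.mpr (ne_of_gt (Real.one_lt_exp_iff.mpr h0))
  have hterm : ∀ m : ℕ, (bernoulli (m + 1) : ℝ) * z ^ (m + 1) / ((m + 1).factorial : ℝ) / z
      = (bernoulli (m + 1) : ℝ) * z ^ m / ((m + 1).factorial : ℝ) := by
    intro m
    rw [pow_succ]
    field_simp
  have hval : (z / (Real.exp z - 1) - 1) / z = 1 / (Real.exp z - 1) - 1 / z := by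
    field_simp
  rw [← hval]
  convert h2 using 2 with m
  · rfl
  · exact (hterm _).symm
  · norm_num

lemma hasDerivAt_T {z : ℝ} (h0 : 0 < z) (h1 : z < 1) : HasDerivAt T (G z) z := by
  set r : ℝ := (1 + z) / 2 with hr
  have hr0 : 0 < r := by rw [hr]; linarith
  have hr1 : r < 1 := by rw [hr]; linarith
  have hzr : z < r := by rw [hr]; linarith
  set g : ℕ → ℝ → ℝ := fun n y => ((bernoulli (n + 1) : ℝ) / (n + 1)) * y ^ (n + 2)
      / ((n + 2) * (Nat.factorial (n + 1))) with hg
  set g' : ℕ → ℝ → ℝ := fun n y => ((bernoulli (n + 1) : ℝ) / (n + 1)) * (((n : ℝ) + 2) * y ^ (n + 1))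
      / ((n + 2) * (Nat.factorial (n + 1))) with hg'
  have hu : Summable (fun n : ℕ => r ^ (n + 1)) := by
    have := (summable_geometric_of_lt_one hr0.le hr1).mul_left r
    simpa [pow_succ, mul_comm] using this
  have hderiv : ∀ (n : ℕ) (y : ℝ), y ∈ Ioo (-r) r → HasDerivAt (g n) (g' n y) y := by
    intro n y _
    have hp : HasDerivAt (fun y : ℝ => y ^ (n + 2)) (((n : ℝ) + 2) * y ^ (n + 1)) y := by
      simpa using hasDerivAt_pow (n + 2) y
    exact (hp.const_mul _).div_const _
  have hbound : ∀ (n : ℕ) (y : ℝ), y ∈ Ioo (-r) r → ‖g' n y‖ ≤ r ^ (n + 1) := by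
    intro n y hy
    have hyr : |y| ≤ r := by
      rw [abs_le]; exact ⟨hy.1.le, hy.2.le⟩
    have h2 : (0:ℝ) < ((n : ℝ) + 2) * (Nat.factorial (n + 1) : ℝ) := by positivity
    rw [hg', Real.norm_eq_abs, abs_div, abs_of_pos h2, abs_mul, abs_mul, abs_pow,
      abs_of_pos (show (0:ℝ) < (n:ℝ) + 2 by positivity), abs_div,
      abs_of_pos (show (0:ℝ) < (n:ℝ) + 1 by positivity)]
    rw [div_le_iff₀ h2]
    have hb : |(bernoulli (n + 1) : ℝ)| / ((n : ℝ) + 1) ≤ (Nat.factorial (n + 1) : ℝ) := by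
      rw [div_le_iff₀ (show (0:ℝ) < (n:ℝ) + 1 by positivity)]
      calc |(bernoulli (n + 1) : ℝ)| ≤ ((n + 1).factorial : ℝ) := bernoulli_abs_le_real (n + 1)
        _ ≤ ((n + 1).factorial : ℝ) * ((n : ℝ) + 1) := by
            nlinarith [Nat.cast_pos (α := ℝ).mpr (Nat.factorial_pos (n + 1)), (Nat.cast_nonneg (α := ℝ) n)]
    have hyp : |y| ^ (n + 1) ≤ r ^ (n + 1) := pow_le_pow_left₀ (abs_nonneg y) hyr _
    calc |(bernoulli (n + 1) : ℝ)| / ((n : ℝ) + 1) * (((n : ℝ) + 2) * |y| ^ (n + 1))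
        ≤ (Nat.factorial (n + 1) : ℝ) * (((n : ℝ) + 2) * r ^ (n + 1)) := by
          apply mul_le_mul hb _ (by positivity) (by positivity)
          apply mul_le_mul_of_nonneg_left hyp (by positivity)
      _ = r ^ (n + 1) * (((n : ℝ) + 2) * (Nat.factorial (n + 1) : ℝ)) := by ring
  have hsum0 : Summable fun n => g n z := by
    apply Summable.of_norm
    apply Summable.of_nonneg_of_le (fun n => norm_nonneg _) (fun n => ?_) hu
    have := hbound n z ⟨by linarith, hzr⟩
    have hzr' : |z| ≤ r := by rw [abs_of_pos h0]; exact hzr.le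
    rw [hg, Real.norm_eq_abs]
    calc |(bernoulli (n + 1) : ℝ) / (↑n + 1) * z ^ (n + 2) / ((↑n + 2) * ↑(n + 1).factorial)|
        = |(bernoulli (n + 1) : ℝ)| / (↑n + 1) * |z| ^ (n + 2) / ((↑n + 2) * ↑(n + 1).factorial) := by
          rw [abs_div, abs_mul, abs_div, abs_pow,
            abs_of_pos (show (0:ℝ) < (n:ℝ) + 1 by positivity),
            abs_of_pos (show (0:ℝ) < ((n:ℝ) + 2) * ((n+1).factorial : ℝ) by positivity)]
      _ ≤ r ^ (n + 1) := by
          have hb2 : |(bernoulli (n + 1) : ℝ)| / ((n : ℝ) + 1) / ((↑n + 2) * ↑(n + 1).factorial) ≤ 1 := by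
            rw [div_div, div_le_one (by positivity)]
            calc |(bernoulli (n + 1) : ℝ)| ≤ ((n + 1).factorial : ℝ) := bernoulli_abs_le_real (n + 1)
              _ ≤ (↑n + 1) * ((↑n + 2) * ↑(n + 1).factorial) := by
                  have hf : (0:ℝ) < ((n + 1).factorial : ℝ) := by positivity
                  have hn : (0:ℝ) ≤ (n:ℝ) := Nat.cast_nonneg n
                  nlinarith [hf, hn, mul_nonneg hn hn]
          have hzp : |z| ^ (n + 2) ≤ r ^ (n + 1) := by
            calc |z| ^ (n + 2) ≤ r ^ (n + 2) := pow_le_pow_left₀ (abs_nonneg z) hzr' _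
              _ ≤ r ^ (n + 1) := pow_le_pow_of_le_one hr0.le hr1.le (by omega)
          calc |(bernoulli (n + 1) : ℝ)| / (↑n + 1) * |z| ^ (n + 2) / ((↑n + 2) * ↑(n + 1).factorial)
              = |(bernoulli (n + 1) : ℝ)| / (↑n + 1) / ((↑n + 2) * ↑(n + 1).factorial) * |z| ^ (n + 2) := by
                ring
            _ ≤ 1 * r ^ (n + 1) := by
                apply mul_le_mul hb2 hzp (by positivity) (by norm_num)
            _ = r ^ (n + 1) := one_mul _
  have hmain := hasDerivAt_tsum_of_isPreconnected hu isOpen_Ioo isPreconnected_Ioo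
    hderiv hbound (Set.mem_Ioo.mpr ⟨by linarith, hzr⟩) hsum0 (Set.mem_Ioo.mpr ⟨by linarith, hzr⟩)
  have hTeq : T = fun y => ∑' n, g n y := rfl
  rw [hTeq]
  have hval : (∑' n, g' n z) = G z := by
    refine tsum_congr fun n => ?_
    rw [hg']
    have hfne : ((n + 1).factorial : ℝ) ≠ 0 := by positivity
    have h1 : ((n : ℝ) + 1) ≠ 0 := by positivity
    have h2 : ((n : ℝ) + 2) ≠ 0 := by positivity
    field_simp
  rw [← hval]
  exact hmain

lemma hasDerivAt_G {z : ℝ} (h0 : 0 < z) (h1 : z < 1) :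
    HasDerivAt G (1 / (Real.exp z - 1) - 1 / z) z := by
  set r : ℝ := (1 + z) / 2 with hr
  have hr0 : 0 < r := by rw [hr]; linarith
  have hr1 : r < 1 := by rw [hr]; linarith
  have hzr : z < r := by rw [hr]; linarith
  set g : ℕ → ℝ → ℝ := fun n y => (bernoulli (n + 1) : ℝ) * y ^ (n + 1)
      / ((n + 1) * (Nat.factorial (n + 1))) with hg
  set g' : ℕ → ℝ → ℝ := fun n y => (bernoulli (n + 1) : ℝ) * (((n : ℝ) + 1) * y ^ n)
      / ((n + 1) * (Nat.factorial (n + 1))) with hg'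
  have hu : Summable (fun n : ℕ => r ^ n) := summable_geometric_of_lt_one hr0.le hr1
  have hderiv : ∀ (n : ℕ) (y : ℝ), y ∈ Ioo (-r) r → HasDerivAt (g n) (g' n y) y := by
    intro n y _
    have hp : HasDerivAt (fun y : ℝ => y ^ (n + 1)) (((n : ℝ) + 1) * y ^ n) y := by
      simpa using hasDerivAt_pow (n + 1) y
    exact (hp.const_mul _).div_const _
  have hbound : ∀ (n : ℕ) (y : ℝ), y ∈ Ioo (-r) r → ‖g' n y‖ ≤ r ^ n := by
    intro n y hy
    have hyr : |y| ≤ r := by rw [abs_le]; exact ⟨hy.1.le, hy.2.le⟩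
    have h2 : (0:ℝ) < ((n : ℝ) + 1) * (Nat.factorial (n + 1) : ℝ) := by positivity
    rw [hg', Real.norm_eq_abs, abs_div, abs_of_pos h2, abs_mul, abs_mul, abs_pow,
      abs_of_pos (show (0:ℝ) < (n:ℝ) + 1 by positivity)]
    rw [div_le_iff₀ h2]
    have hb : |(bernoulli (n + 1) : ℝ)| ≤ (Nat.factorial (n + 1) : ℝ) := bernoulli_abs_le_real (n + 1)
    have hyp : |y| ^ n ≤ r ^ n := pow_le_pow_left₀ (abs_nonneg y) hyr _
    calc |(bernoulli (n + 1) : ℝ)| * (((n : ℝ) + 1) * |y| ^ n)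
        ≤ (Nat.factorial (n + 1) : ℝ) * (((n : ℝ) + 1) * r ^ n) := by
          apply mul_le_mul hb _ (by positivity) (by positivity)
          apply mul_le_mul_of_nonneg_left hyp (by positivity)
      _ = r ^ n * (((n : ℝ) + 1) * (Nat.factorial (n + 1) : ℝ)) := by ring
  have hsum0 : Summable fun n => g n z := by
    apply Summable.of_norm
    apply Summable.of_nonneg_of_le (fun n => norm_nonneg _) (fun n => ?_) hu
    have hzr' : |z| ≤ r := by rw [abs_of_pos h0]; exact hzr.le
    rw [hg, Real.norm_eq_abs]
    have heq : |(bernoulli (n + 1) : ℝ) * z ^ (n + 1) / ((↑n + 1) * ↑(n + 1).factorial)|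
        = |(bernoulli (n + 1) : ℝ)| * |z| ^ (n + 1) / ((↑n + 1) * ↑(n + 1).factorial) := by
      rw [abs_div, abs_mul, abs_pow,
        abs_of_pos (show (0:ℝ) < ((n:ℝ) + 1) * ((n+1).factorial : ℝ) by positivity)]
    rw [heq]
    have hb : |(bernoulli (n + 1) : ℝ)| ≤ ((n + 1).factorial : ℝ) := bernoulli_abs_le_real (n + 1)
    have hzp : |z| ^ (n + 1) ≤ r ^ n := by
      calc |z| ^ (n + 1) ≤ r ^ (n + 1) := pow_le_pow_left₀ (abs_nonneg z) hzr' _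
        _ ≤ r ^ n := pow_le_pow_of_le_one hr0.le hr1.le (by omega)
    rw [div_le_iff₀ (show (0:ℝ) < ((n:ℝ) + 1) * ((n+1).factorial : ℝ) by positivity)]
    calc |(bernoulli (n + 1) : ℝ)| * |z| ^ (n + 1)
        ≤ ((n + 1).factorial : ℝ) * r ^ n := by
          apply mul_le_mul hb hzp (by positivity) (by positivity)
      _ ≤ r ^ n * ((↑n + 1) * ↑(n + 1).factorial) := by
          have hf : (0:ℝ) < ((n + 1).factorial : ℝ) := by positivity
          have hn : (0:ℝ) ≤ (n:ℝ) := Nat.cast_nonneg n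
          have hrn : (0:ℝ) ≤ r ^ n := by positivity
          nlinarith [hf, hn, hrn, mul_nonneg hrn (mul_nonneg hn hf.le)]
  have hmain := hasDerivAt_tsum_of_isPreconnected hu isOpen_Ioo isPreconnected_Ioo
    hderiv hbound (Set.mem_Ioo.mpr ⟨by linarith, hzr⟩) hsum0 (Set.mem_Ioo.mpr ⟨by linarith, hzr⟩)
  have hGeq : G = fun y => ∑' n, g n y := rfl
  rw [hGeq]
  have hval : (∑' n, g' n z) = 1 / (Real.exp z - 1) - 1 / z := by
    have htail := hasSum_bern_tail h0 h1
    rw [← htail.tsum_eq]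
    refine tsum_congr fun n => ?_
    rw [hg']
    have hfne : ((n + 1).factorial : ℝ) ≠ 0 := by positivity
    have hone : ((n : ℝ) + 1) ≠ 0 := by positivity
    field_simp
  rw [← hval]
  exact hmain

lemma Li2_exp_eq (y : ℝ) :
    Li2 (Real.exp (-y)) = ∑' n : ℕ, Real.exp (-(((n : ℝ) + 1) * y)) / ((n : ℝ) + 1) ^ 2 := by
  unfold Li2
  refine tsum_congr fun n => ?_
  have h1 : Real.exp (-y) ^ (n + 1) = Real.exp (-(((n : ℝ) + 1) * y)) := by
    rw [← Real.exp_nat_mul]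
    congr 1
    push_cast
    ring
  rw [h1]
  norm_num

lemma hasDerivAt_Li2_exp {z : ℝ} (h0 : 0 < z) :
    HasDerivAt (fun y => Li2 (Real.exp (-y))) (Real.log (1 - Real.exp (-z))) z := by
  set q : ℝ := Real.exp (-(z / 2)) with hq
  have hq0 : 0 < q := Real.exp_pos _
  have hq1 : q < 1 := Real.exp_lt_one_iff.mpr (by linarith)
  set f : ℕ → ℝ → ℝ := fun n y => Real.exp (-(((n : ℝ) + 1) * y)) / ((n : ℝ) + 1) ^ 2 with hf
  set f' : ℕ → ℝ → ℝ := fun n y => Real.exp (-(((n : ℝ) + 1) * y)) * (-(((n : ℝ) + 1))) / ((n : ℝ) + 1) ^ 2 with hf'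
  have hu : Summable (fun n : ℕ => q ^ (n + 1)) := by
    have := (summable_geometric_of_lt_one hq0.le hq1).mul_left q
    simpa [pow_succ, mul_comm] using this
  have hderiv : ∀ (n : ℕ) (y : ℝ), y ∈ Ioi (z / 2) → HasDerivAt (f n) (f' n y) y := by
    intro n y _
    have hinner : HasDerivAt (fun x : ℝ => -(((n : ℝ) + 1) * x)) (-((n : ℝ) + 1)) y := by
      simpa using ((hasDerivAt_id y).const_mul ((n : ℝ) + 1)).fun_neg
    have hexp := (Real.hasDerivAt_exp (-(((n : ℝ) + 1) * y))).comp y hinner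
    exact hexp.div_const _
  have hbound : ∀ (n : ℕ) (y : ℝ), y ∈ Ioi (z / 2) → ‖f' n y‖ ≤ q ^ (n + 1) := by
    intro n y hy
    rw [Set.mem_Ioi] at hy
    have hqn : q ^ (n + 1) = Real.exp (-(((n : ℝ) + 1) * (z / 2))) := by
      rw [hq, ← Real.exp_nat_mul]
      congr 1
      push_cast
      ring
    rw [hf', Real.norm_eq_abs, abs_div, abs_mul, abs_neg,
      abs_of_pos (show (0:ℝ) < (n:ℝ) + 1 by positivity),
      abs_of_pos (Real.exp_pos _), abs_of_pos (show (0:ℝ) < ((n:ℝ) + 1) ^ 2 by positivity),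
      hqn]
    have h1 : Real.exp (-(((n : ℝ) + 1) * y)) ≤ Real.exp (-(((n : ℝ) + 1) * (z / 2))) := by
      apply Real.exp_le_exp.mpr
      have : (0:ℝ) < (n:ℝ) + 1 := by positivity
      nlinarith
    calc Real.exp (-(((n : ℝ) + 1) * y)) * ((n : ℝ) + 1) / ((n : ℝ) + 1) ^ 2
        = Real.exp (-(((n : ℝ) + 1) * y)) / ((n : ℝ) + 1) := by
          rw [pow_two]
          field_simp
      _ ≤ Real.exp (-(((n : ℝ) + 1) * (z / 2))) / 1 :=
          div_le_div₀ (Real.exp_pos _).le h1 one_pos (by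
            have : (0:ℝ) ≤ (n:ℝ) := Nat.cast_nonneg n
            linarith)
      _ = Real.exp (-(((n : ℝ) + 1) * (z / 2))) := div_one _
  have hsum0 : Summable fun n => f n z := by
    apply Summable.of_nonneg_of_le (fun n => by positivity) (fun n => ?_) hu
    have hqn : q ^ (n + 1) = Real.exp (-(((n : ℝ) + 1) * (z / 2))) := by
      rw [hq, ← Real.exp_nat_mul]
      congr 1
      push_cast
      ring
    rw [hf, hqn]
    have h1 : Real.exp (-(((n : ℝ) + 1) * z)) ≤ Real.exp (-(((n : ℝ) + 1) * (z / 2))) := by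
      apply Real.exp_le_exp.mpr
      have : (0:ℝ) < (n:ℝ) + 1 := by positivity
      nlinarith
    calc Real.exp (-(((n : ℝ) + 1) * z)) / ((n : ℝ) + 1) ^ 2
        ≤ Real.exp (-(((n : ℝ) + 1) * (z / 2))) / 1 :=
          div_le_div₀ (Real.exp_pos _).le h1 one_pos (by nlinarith [Nat.cast_nonneg (α := ℝ) n])
      _ = Real.exp (-(((n : ℝ) + 1) * (z / 2))) := div_one _
  have hmem : z ∈ Ioi (z / 2) := Set.mem_Ioi.mpr (by linarith)
  have hmain := hasDerivAt_tsum_of_isPreconnected hu isOpen_Ioi isPreconnected_Ioi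
    hderiv hbound hmem hsum0 hmem
  have hfeq : (fun y => Li2 (Real.exp (-y))) = fun y => ∑' n, f n y := funext Li2_exp_eq
  rw [hfeq]
  have hx : |Real.exp (-z)| < 1 := by
    rw [abs_of_pos (Real.exp_pos _)]
    exact Real.exp_lt_one_iff.mpr (by linarith)
  have hlog := (hasSum_pow_div_log_of_abs_lt_one hx).neg
  rw [neg_neg] at hlog
  have hval : (∑' n, f' n z) = Real.log (1 - Real.exp (-z)) := by
    rw [← hlog.tsum_eq]
    refine tsum_congr fun n => ?_
    rw [hf']
    have h1 : Real.exp (-z) ^ (n + 1) = Real.exp (-(((n : ℝ) + 1) * z)) := by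
      rw [← Real.exp_nat_mul]
      congr 1
      push_cast
      ring
    show Real.exp (-(((n:ℝ) + 1) * z)) * -((n:ℝ) + 1) / ((n:ℝ) + 1) ^ 2
        = -(Real.exp (-z) ^ (n + 1) / ((n:ℝ) + 1))
    rw [h1]
    have hone : ((n : ℝ) + 1) ≠ 0 := by positivity
    rw [pow_two]
    field_simp
  rw [← hval]
  exact hmain

open Filter Topology

lemma hasSum_inv_sq : HasSum (fun n : ℕ => 1 / ((n : ℝ) + 1) ^ 2) (π ^ 2 / 6) := by
  have hz := hasSum_zeta_two
  have hz1 := (hasSum_nat_add_iff' (f := fun n : ℕ => (1 : ℝ) / (n : ℝ) ^ 2) 1).mpr hz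
  simp only [range_one, sum_singleton, Nat.cast_zero] at hz1
  norm_num at hz1
  convert hz1 using 2 with n
  · rfl
  push_cast
  ring

lemma contOn_Li2exp :
    ContinuousOn (fun y => ∑' n : ℕ, Real.exp (-(((n : ℝ) + 1) * y)) / ((n : ℝ) + 1) ^ 2)
      (Ici (0 : ℝ)) := by
  apply continuousOn_tsum (u := fun n : ℕ => 1 / ((n : ℝ) + 1) ^ 2)
  · intro n
    apply Continuous.continuousOn
    exact (Real.continuous_exp.comp ((continuous_const.mul continuous_id).neg)).div_const _
  · exact hasSum_inv_sq.summable
  · intro n y hy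
    rw [Set.mem_Ici] at hy
    rw [Real.norm_eq_abs, abs_div, abs_of_pos (Real.exp_pos _),
      abs_of_pos (show (0:ℝ) < ((n:ℝ)+1)^2 by positivity)]
    gcongr
    exact Real.exp_le_one_iff.mpr (by nlinarith [Nat.cast_nonneg (α := ℝ) n])

lemma T_bound (n : ℕ) (y : ℝ) (hy : |y| ≤ 1) :
    ‖((bernoulli (n + 1) : ℝ) / (n + 1)) * y ^ (n + 2) / ((n + 2) * (Nat.factorial (n + 1)))‖
      ≤ 1 / ((n : ℝ) + 1) ^ 2 := by
  rw [Real.norm_eq_abs, abs_div, abs_mul, abs_div, abs_pow,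
    abs_of_pos (show (0:ℝ) < (n:ℝ) + 1 by positivity),
    abs_of_pos (show (0:ℝ) < ((n:ℝ) + 2) * ((n + 1).factorial : ℝ) by positivity)]
  have hb : |(bernoulli (n + 1) : ℝ)| ≤ ((n + 1).factorial : ℝ) := bernoulli_abs_le_real (n + 1)
  have hyp : |y| ^ (n + 2) ≤ 1 := pow_le_one₀ (abs_nonneg y) hy
  have hf : (0:ℝ) < ((n + 1).factorial : ℝ) := by positivity
  have hn : (0:ℝ) ≤ (n : ℝ) := Nat.cast_nonneg n
  rw [div_le_div_iff₀ (by positivity) (by positivity)]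
  calc |(bernoulli (n + 1) : ℝ)| / ((n:ℝ) + 1) * |y| ^ (n + 2) * ((n:ℝ) + 1) ^ 2
      ≤ ((n + 1).factorial : ℝ) / ((n:ℝ) + 1) * 1 * ((n:ℝ) + 1) ^ 2 := by
        apply mul_le_mul_of_nonneg_right _ (by positivity)
        apply mul_le_mul _ hyp (by positivity) (by positivity)
        exact div_le_div_of_nonneg_right hb (by positivity) |>.trans_eq rfl
    _ = ((n + 1).factorial : ℝ) * ((n:ℝ) + 1) := by
        field_simp
    _ ≤ 1 * (((n:ℝ) + 2) * ((n + 1).factorial : ℝ)) := by nlinarith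

lemma contOn_T : ContinuousOn T (Icc (-1 : ℝ) 1) := by
  apply continuousOn_tsum (u := fun n : ℕ => 1 / ((n : ℝ) + 1) ^ 2)
  · intro n
    apply Continuous.continuousOn
    exact ((continuous_const.mul (continuous_pow (n + 2))).div_const _)
  · exact hasSum_inv_sq.summable
  · intro n y hy
    exact T_bound n y (abs_le.mpr ⟨hy.1, hy.2⟩)

lemma T_zero : T 0 = 0 := by
  unfold T
  convert tsum_zero with n
  simp

lemma G_bound (n : ℕ) (y : ℝ) (hy : |y| ≤ 1 / 2) :
    ‖(bernoulli (n + 1) : ℝ) * y ^ (n + 1) / ((n + 1) * (Nat.factorial (n + 1)))‖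
      ≤ (1 / 2) ^ (n + 1) := by
  rw [Real.norm_eq_abs, abs_div, abs_mul, abs_pow,
    abs_of_pos (show (0:ℝ) < ((n:ℝ) + 1) * ((n + 1).factorial : ℝ) by positivity)]
  have hb : |(bernoulli (n + 1) : ℝ)| ≤ ((n + 1).factorial : ℝ) := bernoulli_abs_le_real (n + 1)
  have hyp : |y| ^ (n + 1) ≤ (1 / 2) ^ (n + 1) := pow_le_pow_left₀ (abs_nonneg y) hy _
  rw [div_le_iff₀ (by positivity)]
  have hf : (0:ℝ) < ((n + 1).factorial : ℝ) := by positivity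
  have hn : (0:ℝ) ≤ (n : ℝ) := Nat.cast_nonneg n
  calc |(bernoulli (n + 1) : ℝ)| * |y| ^ (n + 1)
      ≤ ((n + 1).factorial : ℝ) * (1 / 2) ^ (n + 1) :=
        mul_le_mul hb hyp (by positivity) (by positivity)
    _ ≤ (1 / 2) ^ (n + 1) * (((n:ℝ) + 1) * ((n + 1).factorial : ℝ)) := by
        have h2 : (0:ℝ) ≤ (1/2:ℝ) ^ (n + 1) := by positivity
        nlinarith [mul_nonneg h2 (mul_nonneg hn hf.le)]
lemma contOn_G : ContinuousOn G (Icc (-(1/2) : ℝ) (1/2)) := by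
  apply continuousOn_tsum (u := fun n : ℕ => (1 / 2 : ℝ) ^ (n + 1))
  · intro n
    apply Continuous.continuousOn
    exact ((continuous_const.mul (continuous_pow (n + 1))).div_const _)
  · have := (summable_geometric_of_lt_one (by norm_num : (0:ℝ) ≤ 1/2) (by norm_num)).mul_left (1/2 : ℝ)
    simpa [pow_succ, mul_comm] using this
  · intro n y hy
    exact G_bound n y (abs_le.mpr ⟨hy.1, hy.2⟩)

lemma G_zero : G 0 = 0 := by
  unfold G
  convert tsum_zero with n
  simp

lemma eq_on_of_deriv {F : ℝ → ℝ} (hF : ∀ y ∈ Ioo (0:ℝ) 1, HasDerivAt F 0 y) {a b : ℝ}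
    (ha : a ∈ Ioo (0:ℝ) 1) (hb : b ∈ Ioo (0:ℝ) 1) (hab : a ≤ b) : F b = F a := by
  have hsub : Icc a b ⊆ Ioo 0 1 := fun x hx => ⟨lt_of_lt_of_le ha.1 hx.1, lt_of_le_of_lt hx.2 hb.2⟩
  have hcont : ContinuousOn F (Icc a b) := fun x hx =>
    ((hF x (hsub hx)).continuousAt).continuousWithinAt
  have hderiv : ∀ x ∈ Ico a b, HasDerivWithinAt F 0 (Ici x) x := fun x hx =>
    ((hF x (hsub ⟨hx.1, hx.2.le⟩)).hasDerivWithinAt)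
  exact constant_of_has_deriv_right_zero hcont hderiv b (right_mem_Icc.mpr hab)

lemma val_eq_zero_of_tendsto {F : ℝ → ℝ} {z : ℝ} (hz0 : 0 < z)
    (hconst : ∀ w ∈ Ioo (0:ℝ) z, F w = F z)
    (hlim : Tendsto F (𝓝[Ioo (0:ℝ) z] 0) (𝓝 0)) : F z = 0 := by
  have hne : (𝓝[Ioo (0:ℝ) z] 0).NeBot := by
    apply mem_closure_iff_nhdsWithin_neBot.mp
    rw [closure_Ioo (ne_of_lt hz0)]
    exact ⟨le_refl 0, hz0.le⟩
  have h2 : Tendsto F (𝓝[Ioo (0:ℝ) z] 0) (𝓝 (F z)) := by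
    apply Tendsto.congr' _ tendsto_const_nhds
    filter_upwards [self_mem_nhdsWithin] with w hw
    exact (hconst w hw).symm
  exact tendsto_nhds_unique h2 hlim

lemma hasDerivAt_one_sub_exp_neg (y : ℝ) :
    HasDerivAt (fun x : ℝ => 1 - Real.exp (-x)) (Real.exp (-y)) y := by
  have h := ((Real.hasDerivAt_exp (-y)).comp y (hasDerivAt_neg y)).const_sub 1
  simpa using h

lemma tendsto_log_one_sub_exp {m : ℝ} (hm : 0 < m) :
    Tendsto (fun x => Real.log (1 - Real.exp (-x)) - Real.log x)
      (𝓝[Ioo (0:ℝ) m] 0) (𝓝 0) := by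
  have hd : HasDerivAt (fun t : ℝ => 1 - Real.exp (-t)) 1 0 := by
    have := hasDerivAt_one_sub_exp_neg 0
    simpa using this
  rw [hasDerivAt_iff_tendsto_slope] at hd
  have hsub : Ioo (0:ℝ) m ⊆ {(0:ℝ)}ᶜ := fun x hx => ne_of_gt hx.1
  have hslope : Tendsto (fun x => (1 - Real.exp (-x)) / x) (𝓝[Ioo (0:ℝ) m] 0) (𝓝 1) := by
    apply Tendsto.congr' _ (hd.mono_left (nhdsWithin_mono 0 hsub))
    filter_upwards [self_mem_nhdsWithin] with x hx
    rw [slope_def_field]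
    simp [Real.exp_zero]
  have hlog : Tendsto (fun x => Real.log ((1 - Real.exp (-x)) / x))
      (𝓝[Ioo (0:ℝ) m] 0) (𝓝 0) := by
    have := (Real.continuousAt_log one_ne_zero).tendsto.comp hslope
    rwa [Real.log_one] at this
  apply Tendsto.congr' _ hlog
  filter_upwards [self_mem_nhdsWithin] with x hx
  have hx0 : 0 < x := hx.1
  have hlt : Real.exp (-x) < 1 := Real.exp_lt_one_iff.mpr (by linarith)
  exact (Real.log_div (ne_of_gt (by linarith)) (ne_of_gt hx0))

lemma tendsto_G_zero {m : ℝ} (hm : m ≤ 1/2) :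
    Tendsto G (𝓝[Ioo (0:ℝ) m] 0) (𝓝 0) := by
  have hc := contOn_G 0 ⟨by norm_num, by norm_num⟩
  rw [ContinuousWithinAt, G_zero] at hc
  apply hc.mono_left (nhdsWithin_mono 0 ?_)
  intro x hx
  exact ⟨by linarith [hx.1], by linarith [hx.2]⟩

lemma G_eq {y : ℝ} (hy : y ∈ Ioo (0:ℝ) 1) :
    G y = Real.log (1 - Real.exp (-y)) - Real.log y := by
  set φ : ℝ → ℝ := fun y => Real.log (1 - Real.exp (-y)) - Real.log y - G y with hφ
  have hderiv : ∀ y ∈ Ioo (0:ℝ) 1, HasDerivAt φ 0 y := by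
    intro y hy
    have hy0 : 0 < y := hy.1
    have hy1 : y < 1 := hy.2
    have hlt : Real.exp (-y) < 1 := Real.exp_lt_one_iff.mpr (by linarith)
    have h1me : 0 < 1 - Real.exp (-y) := by linarith
    have hlog1 : HasDerivAt (fun x => Real.log (1 - Real.exp (-x)))
        (Real.exp (-y) / (1 - Real.exp (-y))) y :=
      (hasDerivAt_one_sub_exp_neg y).log (ne_of_gt h1me)
    have hlog2 : HasDerivAt Real.log y⁻¹ y := Real.hasDerivAt_log (ne_of_gt hy0)
    have hG := hasDerivAt_G hy0 hy1
    have h := (hlog1.fun_sub hlog2).fun_sub hG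
    refine h.congr_deriv ?_; symm
    have hexpy : Real.exp y ≠ 0 := Real.exp_ne_zero y
    have hey1 : Real.exp y - 1 ≠ 0 := sub_ne_zero.mpr (ne_of_gt (Real.one_lt_exp_iff.mpr hy0))
    have key : Real.exp (-y) / (1 - Real.exp (-y)) = 1 / (Real.exp y - 1) := by
      rw [Real.exp_neg]
      field_simp
    rw [key]
    field_simp
    ring
  set m : ℝ := min y (1/2) with hm
  have hm2 : m ≤ 1/2 := min_le_right _ _
  have hmy : m ≤ y := min_le_left _ _
  have hz' : m ∈ Ioo (0:ℝ) 1 := ⟨lt_min hy.1 (by norm_num), lt_of_le_of_lt hm2 (by norm_num)⟩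
  have hconst : ∀ w ∈ Ioo (0:ℝ) m, φ w = φ m := by
    intro w hw
    have hwm : w ∈ Ioo (0:ℝ) 1 := ⟨hw.1, lt_trans hw.2 hz'.2⟩
    exact (eq_on_of_deriv hderiv hwm hz' hw.2.le).symm
  have hlim : Tendsto φ (𝓝[Ioo (0:ℝ) m] 0) (𝓝 0) := by
    have := (tendsto_log_one_sub_exp hz'.1).sub (tendsto_G_zero hm2)
    simpa using this
  have hφm : φ m = 0 := val_eq_zero_of_tendsto hz'.1 hconst hlim
  have hφy : φ y = 0 := by
    rw [eq_on_of_deriv hderiv hz' hy hmy]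
    exact hφm
  have := hφy
  simp only [hφ] at this
  linarith

theorem dilog_exp_expansion (z : ℝ) (hz0 : 0 < z) (hz1 : z < 1) :
    Li2 (Real.exp (-z))
      = Real.pi ^ 2 / 6 + z * Real.log z - z
        + ∑' n : ℕ, ((bernoulli (n + 1) : ℝ) / (n + 1)) * z ^ (n + 2)
            / ((n + 2) * (Nat.factorial (n + 1))) := by
  set D : ℝ → ℝ := fun y => Li2 (Real.exp (-y)) - (π ^ 2 / 6 + y * Real.log y - y + T y) with hD
  have hderiv : ∀ y ∈ Ioo (0:ℝ) 1, HasDerivAt D 0 y := by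
    intro y hy
    have hy0 : 0 < y := hy.1
    have hy1 : y < 1 := hy.2
    have hmul : HasDerivAt (fun x : ℝ => x * Real.log x) (Real.log y + 1) y := by
      have := (hasDerivAt_id y).fun_mul (Real.hasDerivAt_log hy0.ne')
      have hyne : y * y⁻¹ = 1 := mul_inv_cancel₀ hy0.ne'
      simpa [hyne] using this
    have hF2 : HasDerivAt (fun x => π ^ 2 / 6 + x * Real.log x - x + T x)
        (Real.log y + G y) y := by
      have h := ((hmul.const_add (π ^ 2 / 6)).sub (hasDerivAt_id y)).add (hasDerivAt_T hy0 hy1)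
      refine h.congr_deriv ?_; symm
      simp
    have h := (hasDerivAt_Li2_exp hy0).fun_sub hF2
    refine h.congr_deriv ?_; symm
    rw [G_eq hy]
    ring
  set m : ℝ := min z (1/2) with hm
  have hm2 : m ≤ 1/2 := min_le_right _ _
  have hmz : m ≤ z := min_le_left _ _
  have hz : z ∈ Ioo (0:ℝ) 1 := ⟨hz0, hz1⟩
  have hz' : m ∈ Ioo (0:ℝ) 1 := ⟨lt_min hz0 (by norm_num), lt_of_le_of_lt hm2 (by norm_num)⟩
  have hconst : ∀ w ∈ Ioo (0:ℝ) m, D w = D m := by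
    intro w hw
    have hwm : w ∈ Ioo (0:ℝ) 1 := ⟨hw.1, lt_trans hw.2 hz'.2⟩
    exact (eq_on_of_deriv hderiv hwm hz' hw.2.le).symm
  have hLi2 : Tendsto (fun y => Li2 (Real.exp (-y))) (𝓝[Ioo (0:ℝ) m] 0) (𝓝 (π ^ 2 / 6)) := by
    have hc := contOn_Li2exp 0 (Set.mem_Ici.mpr le_rfl)
    rw [ContinuousWithinAt] at hc
    have hval : (∑' n : ℕ, Real.exp (-(((n:ℝ) + 1) * 0)) / ((n:ℝ) + 1) ^ 2) = π ^ 2 / 6 := by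
      rw [← hasSum_inv_sq.tsum_eq]
      refine tsum_congr fun n => ?_
      simp
    rw [hval] at hc
    have hfeq : (fun y => Li2 (Real.exp (-y)))
        = fun y => ∑' n : ℕ, Real.exp (-(((n:ℝ) + 1) * y)) / ((n:ℝ) + 1) ^ 2 := funext Li2_exp_eq
    rw [hfeq]
    exact hc.mono_left (nhdsWithin_mono 0 (fun x hx => le_of_lt hx.1))
  have hT : Tendsto T (𝓝[Ioo (0:ℝ) m] 0) (𝓝 0) := by
    have hc := contOn_T 0 ⟨by norm_num, by norm_num⟩
    rw [ContinuousWithinAt, T_zero] at hc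
    apply hc.mono_left (nhdsWithin_mono 0 ?_)
    intro x hx
    exact ⟨by linarith [hx.1], by linarith [hx.2, hm2]⟩
  have hmullog : Tendsto (fun y : ℝ => y * Real.log y) (𝓝[Ioo (0:ℝ) m] 0) (𝓝 0) := by
    have := (Real.continuous_mul_log.tendsto 0).mono_left (nhdsWithin_le_nhds (s := Ioo (0:ℝ) m))
    simpa using this
  have hid : Tendsto (fun y : ℝ => y) (𝓝[Ioo (0:ℝ) m] 0) (𝓝 0) :=
    tendsto_id.mono_left nhdsWithin_le_nhds
  have hlim : Tendsto D (𝓝[Ioo (0:ℝ) m] 0) (𝓝 0) := by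
    have h := hLi2.sub (((hmullog.const_add (π ^ 2 / 6)).sub hid).add hT)
    have : π ^ 2 / 6 - (π ^ 2 / 6 + 0 - 0 + 0) = 0 := by ring
    rwa [this] at h
  have hDm : D m = 0 := val_eq_zero_of_tendsto hz'.1 hconst hlim
  have hDz : D z = 0 := by
    rw [eq_on_of_deriv hderiv hz' hz hmz]
    exact hDm
  have hTz : T z = ∑' n : ℕ, ((bernoulli (n + 1) : ℝ) / (n + 1)) * z ^ (n + 2)
      / ((n + 2) * (Nat.factorial (n + 1))) := rfl
  rw [hD] at hDz
  simp only at hDz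
  rw [← hTz]
  show Li2 (Real.exp (-z)) = π ^ 2 / 6 + z * Real.log z - z + T z
  linarith
end

section
/- For real z with 0 < z < π, ∫_0^∞ e^{−xz} ψ(x+1) dx = (e^z/(e^z − 1)) ∫_0^1 e^{−yz} ψ(y+1) dy + (1/(e^z − 1)) ∫_0^∞ e^{−xz}/(x+1) dx. -/
open MeasureTheory

/-- The digamma function ψ = Γ'/Γ, as the derivative of log ∘ Γ on (0,∞). -/
noncomputable def digamma (x : ℝ) : ℝ := deriv (fun y : ℝ => Real.log (Real.Gamma y)) x

open Set Real

private lemma diffAt_logGamma {x : ℝ} (hx : 0 < x) :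
    DifferentiableAt ℝ (fun y : ℝ => Real.log (Real.Gamma y)) x := by
  refine (Real.differentiableAt_Gamma ?_).log (Real.Gamma_ne_zero ?_) <;>
    exact fun m => ne_of_gt (lt_of_lt_of_le' hx (by simp [neg_nonpos]))

private lemma digamma_add_one {x : ℝ} (hx : 0 < x) :
    digamma (x + 1) = digamma x + 1 / x := by
  have h_rec : ∀ y : ℝ, 0 < y →
      Real.log (Real.Gamma (y + 1)) = Real.log (Real.Gamma y) + Real.log y := by
    intro y hy
    rw [Real.Gamma_add_one hy.ne', Real.log_mul hy.ne' (Real.Gamma_pos_of_pos hy).ne', add_comm]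
  show deriv (fun y : ℝ => Real.log (Real.Gamma y)) (x + 1)
      = deriv (fun y : ℝ => Real.log (Real.Gamma y)) x + 1 / x
  rw [← deriv_comp_add_const, one_div, ← Real.deriv_log,
    ← deriv_add (diffAt_logGamma hx) (Real.differentiableAt_log hx.ne')]
  apply Filter.EventuallyEq.deriv_eq
  filter_upwards [eventually_gt_nhds hx] using h_rec

private lemma digamma_mono {x y : ℝ} (hx : 0 < x) (hxy : x ≤ y) : digamma x ≤ digamma y := by
  rcases eq_or_lt_of_le hxy with rfl | hlt
  · exact le_rfl
  have hy : (0:ℝ) < y := hx.trans hlt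
  have h1 := Real.convexOn_log_Gamma.deriv_le_slope (mem_Ioi.mpr hx) (mem_Ioi.mpr hy) hlt
    (diffAt_logGamma hx)
  have h2 := Real.convexOn_log_Gamma.slope_le_deriv (mem_Ioi.mpr hx) (mem_Ioi.mpr hy) hlt
    (diffAt_logGamma hy)
  exact h1.trans h2

private lemma digamma_nat_le (n : ℕ) : digamma (n + 1) ≤ digamma 1 + n := by
  induction n with
  | zero => simp
  | succ n ih =>
    have h : ((n:ℝ) + 1) + 1 = ((n+1 : ℕ) : ℝ) + 1 := by push_cast; ring
    rw [← h, digamma_add_one (by positivity)]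
    have : 1 / ((n:ℝ) + 1) ≤ 1 := by
      rw [div_le_one (by positivity)]; linarith [Nat.cast_nonneg (α := ℝ) n]
    push_cast
    linarith

private lemma digamma_abs_bound {x : ℝ} (hx : 0 ≤ x) :
    |digamma (x + 1)| ≤ |digamma 1| + x + 1 := by
  have hlb : digamma 1 ≤ digamma (x + 1) := digamma_mono one_pos (by linarith)
  have hub : digamma (x + 1) ≤ digamma 1 + x + 1 := by
    have h1 : digamma (x + 1) ≤ digamma ((⌈x⌉₊ : ℝ) + 1) :=
      digamma_mono (by linarith) (by linarith [Nat.le_ceil x])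
    have h2 := digamma_nat_le ⌈x⌉₊
    have h3 : (⌈x⌉₊ : ℝ) ≤ x + 1 := by
      rcases Nat.eq_zero_or_pos ⌈x⌉₊ with h | h
      · simp [h]; linarith
      · have := Nat.ceil_lt_add_one hx
        linarith
    linarith
  rw [abs_le]
  constructor
  · have := neg_abs_le (digamma 1); linarith
  · have := le_abs_self (digamma 1); linarith

private lemma exp_decay_bound {z x C : ℝ} (hz : 0 < z) (hx : 0 ≤ x) (hC : 0 ≤ C) :
    Real.exp (-x * z) * (C + x) ≤ (C + 2 / z) * Real.exp (-(z / 2) * x) := by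
  have hsplit : Real.exp (-x * z) = Real.exp (-(z/2) * x) * Real.exp (-(z/2) * x) := by
    rw [← Real.exp_add]; ring_nf
  rw [hsplit, mul_assoc]
  have hle1 : Real.exp (-(z/2) * x) ≤ 1 := Real.exp_le_one_iff.mpr (by nlinarith)
  have hkey : Real.exp (-(z/2) * x) * (C + x) ≤ C + 2 / z := by
    have hxle : Real.exp (-(z/2) * x) * x ≤ 2 / z := by
      have ht : z/2 * x ≤ Real.exp (z/2 * x) := by
        have := Real.add_one_le_exp (z/2 * x); nlinarith
      have huv : Real.exp (-(z/2) * x) * Real.exp (z/2 * x) = 1 := by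
        rw [← Real.exp_add]; ring_nf; exact Real.exp_zero
      rw [le_div_iff₀ hz]
      nlinarith [mul_le_mul_of_nonneg_left ht (Real.exp_pos (-(z/2) * x)).le, huv]
    have hCle : Real.exp (-(z/2) * x) * C ≤ C := by nlinarith [Real.exp_pos (-(z/2) * x)]
    calc Real.exp (-(z/2) * x) * (C + x)
        = Real.exp (-(z/2) * x) * C + Real.exp (-(z/2) * x) * x := by ring
      _ ≤ C + 2 / z := add_le_add hCle hxle
  calc Real.exp (-(z/2) * x) * (Real.exp (-(z/2) * x) * (C + x))
      ≤ Real.exp (-(z/2) * x) * (C + 2 / z) := by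
        have := Real.exp_pos (-(z/2) * x); nlinarith
    _ = (C + 2 / z) * Real.exp (-(z/2) * x) := by ring

private lemma integrable_f {z : ℝ} (hz0 : 0 < z) :
    IntegrableOn (fun x => Real.exp (-x * z) * digamma (x + 1)) (Ioi (0:ℝ)) := by
  have hmeas : AEStronglyMeasurable (fun x => Real.exp (-x * z) * digamma (x + 1))
      (volume.restrict (Ioi (0:ℝ))) := by
    apply Measurable.aestronglyMeasurable
    exact (Real.measurable_exp.comp ((measurable_id.neg).mul_const z)).mul
      ((measurable_deriv _).comp (measurable_id.add_const 1))
  set C := |digamma 1| + 1 with hC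
  have hC0 : 0 ≤ C := by positivity
  have hmaj : IntegrableOn (fun x => (C + 2 / z) * Real.exp (-(z/2) * x)) (Ioi (0:ℝ)) :=
    (exp_neg_integrableOn_Ioi 0 (by positivity)).const_mul _
  refine Integrable.mono hmaj hmeas ?_
  rw [ae_restrict_iff' measurableSet_Ioi]
  filter_upwards with x hx
  have hx0 : (0:ℝ) ≤ x := le_of_lt hx
  rw [norm_mul, Real.norm_eq_abs, Real.norm_eq_abs, abs_of_pos (Real.exp_pos _),
    Real.norm_eq_abs]
  have h1 : Real.exp (-x * z) * |digamma (x + 1)| ≤ Real.exp (-x * z) * (C + x) := by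
    have := digamma_abs_bound hx0
    have := Real.exp_pos (-x * z)
    nlinarith
  have h2 := exp_decay_bound hz0 hx0 hC0
  have h3 : (C + 2 / z) * Real.exp (-(z/2) * x) ≤ |(C + 2 / z) * Real.exp (-(z/2) * x)| :=
    le_abs_self _
  calc Real.exp (-x * z) * |digamma (x + 1)| ≤ (C + 2 / z) * Real.exp (-(z/2) * x) :=
        h1.trans h2
    _ ≤ _ := h3

private lemma integrable_g {z : ℝ} (hz0 : 0 < z) :
    IntegrableOn (fun x => Real.exp (-x * z) / (x + 1)) (Ioi (0:ℝ)) := by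
  have hmaj : IntegrableOn (fun x => Real.exp (-z * x)) (Ioi (0:ℝ)) :=
    exp_neg_integrableOn_Ioi 0 hz0
  refine Integrable.mono hmaj ?_ ?_
  · apply ContinuousOn.aestronglyMeasurable ?_ measurableSet_Ioi
    apply ContinuousOn.div
    · exact (Real.continuous_exp.comp (continuous_id.neg.mul continuous_const)).continuousOn
    · exact (continuous_id.add continuous_const).continuousOn
    · intro x hx; have : (0:ℝ) < x := hx; positivity
  · rw [ae_restrict_iff' measurableSet_Ioi]
    filter_upwards with x hx
    have hx0 : (0:ℝ) < x := hx
    rw [Real.norm_eq_abs, Real.norm_eq_abs, abs_of_pos (Real.exp_pos _),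
      abs_of_pos (by positivity)]
    rw [show -z * x = -x * z from by ring, div_le_iff₀ (by positivity)]
    nlinarith [Real.exp_pos (-x * z)]

theorem laplace_digamma_formula (z : ℝ) (hz0 : 0 < z) (hzpi : z < Real.pi) :
    (∫ x in Set.Ioi (0 : ℝ), Real.exp (-x * z) * digamma (x + 1))
      = (Real.exp z / (Real.exp z - 1))
          * (∫ y in (0 : ℝ)..1, Real.exp (-y * z) * digamma (y + 1))
        + (1 / (Real.exp z - 1))
          * ∫ x in Set.Ioi (0 : ℝ), Real.exp (-x * z) / (x + 1) := by
  set f : ℝ → ℝ := fun x => Real.exp (-x * z) * digamma (x + 1) with hf_def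
  set g : ℝ → ℝ := fun x => Real.exp (-x * z) / (x + 1) with hg_def
  have hf : IntegrableOn f (Ioi (0:ℝ)) := integrable_f hz0
  have hg : IntegrableOn g (Ioi (0:ℝ)) := integrable_g hz0
  set F := ∫ x in Ioi (0:ℝ), f x with hF_def
  set G := ∫ x in Ioi (0:ℝ), g x with hG_def
  set A := ∫ y in (0:ℝ)..1, f y with hA_def
  -- split the integral
  have hsplit : F = A + ∫ x in Ioi (1:ℝ), f x := by
    have hU : Ioi (0:ℝ) = Ioc 0 1 ∪ Ioi 1 := (Ioc_union_Ioi_eq_Ioi zero_le_one).symm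
    rw [hF_def, hU, setIntegral_union (Ioc_disjoint_Ioi le_rfl) measurableSet_Ioi
      (hf.mono_set (by rw [hU]; exact subset_union_left))
      (hf.mono_set (by rw [hU]; exact subset_union_right)),
      hA_def, intervalIntegral.integral_of_le zero_le_one]
  -- shift the tail integral
  have hshift : (∫ x in Ioi (1:ℝ), f x) = ∫ x in Ioi (0:ℝ), f (x + 1) := by
    have h := (measurePreserving_add_right (volume : Measure ℝ) (1:ℝ)).setIntegral_preimage_emb
      (Homeomorph.addRight (1:ℝ)).measurableEmbedding f (Ioi 1)
    have hpre : (fun x : ℝ => x + 1) ⁻¹' Ioi 1 = Ioi 0 := by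
      ext x; simp [Set.mem_preimage]
    rw [← h, hpre]
  -- functional equation under the integral
  have hfe : ∀ x ∈ Ioi (0:ℝ), f (x + 1) = Real.exp (-z) * (f x + g x) := by
    intro x hx
    have hx0 : (0:ℝ) < x := hx
    have hd : digamma (x + 1 + 1) = digamma (x + 1) + 1 / (x + 1) :=
      digamma_add_one (by positivity)
    simp only [hf_def, hg_def]
    rw [hd, show (-(x+1) * z) = -x * z + -z by ring, Real.exp_add]
    field_simp
  have htail : (∫ x in Ioi (0:ℝ), f (x + 1)) = Real.exp (-z) * (F + G) := by
    rw [setIntegral_congr_fun measurableSet_Ioi hfe, integral_const_mul, integral_add hf hg]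
  have hEq : F = A + Real.exp (-z) * (F + G) := by
    rw [hshift, htail] at hsplit
    exact hsplit
  -- solve for F
  have hE1 : (1:ℝ) < Real.exp z := Real.one_lt_exp_iff.mpr hz0
  have hEne : Real.exp z - 1 ≠ 0 := by linarith
  have hEpos : Real.exp z ≠ 0 := (Real.exp_pos z).ne'
  have hinv : Real.exp (-z) = (Real.exp z)⁻¹ := Real.exp_neg z
  rw [hinv] at hEq
  show F = Real.exp z / (Real.exp z - 1) * A + 1 / (Real.exp z - 1) * G
  field_simp at hEq ⊢
  linarith [hEq]
end
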